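/- arXiv:2509.11261 — 8 statements merged into one kernel-verified Lean document; each statement's English description precedes it below -/
import Mathlib

section
/- Let X be a finite set and let S be a family of 3-element subsets of X such that every element of X is contained in exactly 3 members of S. Then S can be partitioned into 7 subfamilies S_1, …, S_7 such that, for each i ∈ {1,…,7}, the members of S_i are pairwise disjoint. -/
/-- If `S` is an RX3C family on a finite set `X` (every member of `S` is a
3-element subset of `X` and every element of `X` lies in exactly 3 members of `S`), then `S`
can be partitioned into 7 subfamilies `S_1, …, S_7` (encoded by a coloring `f` with 7 colors)
such that within each subfamily the members are pairwise disjoint. -/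
theorem stmt_1 {α : Type*} [DecidableEq α] (X : Finset α) (S : Finset (Finset α))
    (hsub : ∀ T ∈ S, T ⊆ X) (h3 : ∀ T ∈ S, T.card = 3)
    (hocc : ∀ x ∈ X, (S.filter (fun T => x ∈ T)).card = 3) :
    ∃ f : Finset α → Fin 7, ∀ T ∈ S, ∀ T' ∈ S, T ≠ T' → f T = f T' → Disjoint T T' := by
  have hdeg : ∀ T ∈ S, ((S.erase T).filter (fun T' => ¬ Disjoint T T')).card ≤ 6 := by
    intro T hT
    have hsubN : (S.erase T).filter (fun T' => ¬ Disjoint T T') ⊆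
        T.biUnion (fun x => ((S.filter (fun T' => x ∈ T')).erase T)) := by
      intro T' hT'
      simp only [Finset.mem_filter, Finset.mem_erase] at hT'
      obtain ⟨⟨hne, hTS⟩, hnd⟩ := hT'
      rw [Finset.not_disjoint_iff] at hnd
      obtain ⟨x, hxT, hxT'⟩ := hnd
      simp only [Finset.mem_biUnion, Finset.mem_erase, Finset.mem_filter]
      exact ⟨x, hxT, hne, hTS, hxT'⟩
    calc ((S.erase T).filter (fun T' => ¬ Disjoint T T')).card
        ≤ (T.biUnion (fun x => ((S.filter (fun T' => x ∈ T')).erase T))).card :=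
          Finset.card_le_card hsubN
      _ ≤ ∑ x ∈ T, ((S.filter (fun T' => x ∈ T')).erase T).card := Finset.card_biUnion_le
      _ ≤ ∑ x ∈ T, 2 := by
          apply Finset.sum_le_sum
          intro x hx
          have hxX : x ∈ X := hsub T hT hx
          have hTm : T ∈ S.filter (fun T' => x ∈ T') := Finset.mem_filter.2 ⟨hT, hx⟩
          rw [Finset.card_erase_of_mem hTm, hocc x hxX]
      _ = 6 := by rw [Finset.sum_const, h3 T hT]; rfl
  suffices h : ∀ n (S' : Finset (Finset α)), S' ⊆ S → S'.card = n →
      ∃ f : Finset α → Fin 7, ∀ T ∈ S', ∀ T' ∈ S', T ≠ T' → f T = f T' → Disjoint T T' by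
    exact h S.card S (le_refl _) rfl
  intro n
  induction n with
  | zero =>
    intro S' _ hc
    exact ⟨fun _ => 0, by simp [Finset.card_eq_zero.mp hc]⟩
  | succ n ih =>
    intro S' hS' hc
    obtain ⟨T, hT⟩ : S'.Nonempty := Finset.card_pos.mp (by omega)
    obtain ⟨f, hf⟩ := ih (S'.erase T) ((Finset.erase_subset _ _).trans hS')
      (by rw [Finset.card_erase_of_mem hT, hc]; omega)
    have hTS : T ∈ S := hS' hT
    set N := (S'.erase T).filter (fun T' => ¬ Disjoint T T') with hN
    have hNcard : N.card ≤ 6 := by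
      refine le_trans (Finset.card_le_card ?_) (hdeg T hTS)
      intro T' h
      simp only [hN, Finset.mem_filter, Finset.mem_erase] at h ⊢
      exact ⟨⟨h.1.1, hS' h.1.2⟩, h.2⟩
    obtain ⟨c, hc'⟩ : ∃ c : Fin 7, c ∉ N.image f := by
      by_contra h
      push_neg at h
      have hle := Finset.card_le_card (fun c _ => h c : (Finset.univ : Finset (Fin 7)) ⊆ N.image f)
      have him : (N.image f).card ≤ 6 := Finset.card_image_le.trans hNcard
      simp only [Finset.card_univ, Fintype.card_fin] at hle
      omega
    refine ⟨Function.update f T c, ?_⟩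
    intro T₁ h₁ T₂ h₂ hne heq
    by_cases e1 : T₁ = T
    · subst e1
      rw [Function.update_self, Function.update_of_ne hne.symm] at heq
      by_contra hd
      exact hc' (Finset.mem_image.2 ⟨T₂,
        Finset.mem_filter.2 ⟨Finset.mem_erase.2 ⟨hne.symm, h₂⟩, hd⟩, heq.symm⟩)
    · rw [Function.update_of_ne e1] at heq
      by_cases e2 : T₂ = T
      · subst e2
        rw [Function.update_self] at heq
        by_contra hd
        exact hc' (Finset.mem_image.2 ⟨T₁,
          Finset.mem_filter.2 ⟨Finset.mem_erase.2 ⟨e1, h₁⟩, fun h => hd h.symm⟩, heq⟩)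
      · rw [Function.update_of_ne e2] at heq
        exact hf T₁ (Finset.mem_erase.2 ⟨e1, h₁⟩) T₂ (Finset.mem_erase.2 ⟨e2, h₂⟩) hne heq
end

section
/- Let E=(C,V) be an election and let q ≥ 0 and t ≥ 0 be integers. Let G be the simple graph on vertex set C in which two distinct candidates c and c' are adjacent exactly if |pos_v(c) − pos_v(c')| ≤ q+1 for every voter v ∈ V (i.e., exactly if {c,c'} is a (q,2)-approximate clone). Then C admits a partition into at most t nonempty parts, each of size at most 2 and each being a (q,2)-approximate clone, if and only if G has a matching M with |C| − |M| ≤ t. -/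
/-- In an election `(C, V)` (each voter `v` has a bijective position function
`pos v : C → {1,…,m}`), for integers `q ≥ 0` and `t ≥ 0`: the candidate set admits a partition
into at most `t` nonempty parts, each of size at most 2 and each a `(q,2)`-approximate clone,
iff the graph on `C` whose edges are exactly the `(q,2)`-approximate clone pairs
(i.e. `c ≠ c'` with `|pos_v c − pos_v c'| ≤ q+1` for every voter `v`) has a matching `M`
(a set of pairwise disjoint edges) with `|C| − |M| ≤ t`. -/
theorem stmt_2 {C V : Type*} [Fintype C] [DecidableEq C]
    (pos : V → C → ℕ)
    (hpos : ∀ v : V, Set.BijOn (pos v) Set.univ (Set.Icc 1 (Fintype.card C)))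
    (q t : ℕ) :
    (∃ P : Finset (Finset C), P.card ≤ t ∧
        (∀ X ∈ P, X.Nonempty ∧ X.card ≤ 2 ∧
          ∀ v : V, ∀ x ∈ X, ∀ y ∈ X, |(pos v x : ℤ) - (pos v y : ℤ)| ≤ (q : ℤ) + 1) ∧
        (∀ c : C, ∃ X ∈ P, c ∈ X) ∧
        (∀ X ∈ P, ∀ Y ∈ P, X ≠ Y → Disjoint X Y)) ↔
      (∃ M : Finset (Finset C),
        (∀ e ∈ M, ∃ c c' : C, c ≠ c' ∧
            (∀ v : V, |(pos v c : ℤ) - (pos v c' : ℤ)| ≤ (q : ℤ) + 1) ∧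
            e = {c, c'}) ∧
        (∀ e ∈ M, ∀ e' ∈ M, e ≠ e' → Disjoint e e') ∧
        Fintype.card C - M.card ≤ t) := by
  constructor
  · rintro ⟨P, hPt, hparts, hcover, hdisj⟩
    refine ⟨P.filter (fun X => X.card = 2), ?_, ?_, ?_⟩
    · intro e he
      rw [Finset.mem_filter] at he
      obtain ⟨c, c', hne, rfl⟩ := Finset.card_eq_two.mp he.2
      exact ⟨c, c', hne, fun v => (hparts _ he.1).2.2 v c (by simp) c' (by simp), rfl⟩
    · intro e he e' he' hne
      rw [Finset.mem_filter] at he he'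
      exact hdisj e he.1 e' he'.1 hne
    · have hbu : (Finset.univ : Finset C) = P.biUnion (fun x => x) := by
        ext c
        simp only [Finset.mem_biUnion, Finset.mem_univ, true_iff]
        exact hcover c
      have hcard : Fintype.card C = ∑ X ∈ P, X.card := by
        rw [← Finset.card_univ, hbu,
          Finset.card_biUnion (fun x hx y hy hxy => hdisj x hx y hy hxy)]
      have hsplit := Finset.sum_filter_add_sum_filter_not P (fun X => X.card = 2)
        (fun X => X.card)
      have h2 : ∑ X ∈ P.filter (fun X => X.card = 2), X.card
          = 2 * (P.filter (fun X => X.card = 2)).card := by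
        rw [Finset.sum_congr rfl (fun X hX => (Finset.mem_filter.mp hX).2),
          Finset.sum_const, smul_eq_mul, mul_comm]
      have h1 : ∑ X ∈ P.filter (fun X => ¬ X.card = 2), X.card
          = (P.filter (fun X => ¬ X.card = 2)).card := by
        rw [Finset.sum_congr rfl (fun X hX => ?_), Finset.sum_const, smul_eq_mul, mul_one]
        rw [Finset.mem_filter] at hX
        have hpos := (hparts X hX.1).1.card_pos
        have hle := (hparts X hX.1).2.1
        omega
      have hfc := Finset.card_filter_add_card_filter_not
        (s := P) (p := fun X => X.card = 2)
      omega
  · rintro ⟨M, hedges, hMdisj, hMcard⟩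
    set S := M.biUnion id with hS
    refine ⟨M ∪ (Finset.univ \ S).image (fun c => ({c} : Finset C)), ?_, ?_, ?_, ?_⟩
    · -- cardinality
      have hM2 : ∀ e ∈ M, e.card = 2 := by
        intro e he
        obtain ⟨c, c', hne, -, rfl⟩ := hedges e he
        exact Finset.card_pair hne
      have hScard : S.card = 2 * M.card := by
        show (M.biUnion fun x => x).card = 2 * M.card
        rw [Finset.card_biUnion hMdisj,
          Finset.sum_congr rfl (fun e he => hM2 e he), Finset.sum_const, smul_eq_mul, mul_comm]
      have hSle : S.card ≤ Fintype.card C := Finset.card_le_univ S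
      have h3 : ((Finset.univ \ S).image (fun c => ({c} : Finset C))).card
          ≤ Fintype.card C - S.card := by
        calc ((Finset.univ \ S).image (fun c => ({c} : Finset C))).card
            ≤ (Finset.univ \ S).card := Finset.card_image_le
          _ = Fintype.card C - S.card := by
              rw [Finset.card_sdiff_of_subset (Finset.subset_univ S), Finset.card_univ]
      have h4 := Finset.card_union_le M ((Finset.univ \ S).image (fun c => ({c} : Finset C)))
      omega
    · -- parts properties
      intro X hX
      rcases Finset.mem_union.mp hX with hX | hX
      · obtain ⟨c, c', hne, hclone, rfl⟩ := hedges X hX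
        refine ⟨⟨c, Finset.mem_insert_self _ _⟩, (Finset.card_pair hne).le, ?_⟩
        intro v x hx y hy
        simp only [Finset.mem_insert, Finset.mem_singleton] at hx hy
        rcases hx with rfl | rfl <;> rcases hy with rfl | rfl
        · simp; positivity
        · exact hclone v
        · rw [abs_sub_comm]; exact hclone v
        · simp; positivity
      · obtain ⟨c, -, rfl⟩ := Finset.mem_image.mp hX
        refine ⟨⟨c, Finset.mem_singleton_self c⟩, by simp, ?_⟩
        intro v x hx y hy
        rw [Finset.mem_singleton] at hx hy
        subst hx; subst hy
        simp; positivity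
    · -- cover
      intro c
      by_cases hc : c ∈ S
      · obtain ⟨e, he, hce⟩ := Finset.mem_biUnion.mp hc
        exact ⟨e, Finset.mem_union_left _ he, hce⟩
      · refine ⟨{c}, Finset.mem_union_right _ ?_, Finset.mem_singleton_self c⟩
        exact Finset.mem_image.mpr ⟨c, Finset.mem_sdiff.mpr ⟨Finset.mem_univ c, hc⟩, rfl⟩
    · -- disjointness
      intro X hX Y hY hXY
      have key : ∀ e ∈ M, ∀ c : C, c ∉ S → Disjoint e ({c} : Finset C) := by
        intro e he c hc
        rw [Finset.disjoint_singleton_right]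
        intro hce
        exact hc (Finset.mem_biUnion.mpr ⟨e, he, hce⟩)
      rcases Finset.mem_union.mp hX with hX | hX <;> rcases Finset.mem_union.mp hY with hY | hY
      · exact hMdisj X hX Y hY hXY
      · obtain ⟨c, hc, rfl⟩ := Finset.mem_image.mp hY
        exact key X hX c (Finset.mem_sdiff.mp hc).2
      · obtain ⟨c, hc, rfl⟩ := Finset.mem_image.mp hX
        exact (key Y hY c (Finset.mem_sdiff.mp hc).2).symm
      · obtain ⟨c, hc, rfl⟩ := Finset.mem_image.mp hX
        obtain ⟨c', hc', rfl⟩ := Finset.mem_image.mp hY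
        rw [Finset.disjoint_singleton]
        intro h; exact hXY (by rw [h])
end

section
/- Let G=(U,F) be a simple graph with U={u_1,…,u_r} and let k be an integer with 3 ≤ k ≤ r. Let E=(C,V) be any election with candidate set C = U ∪ {d_1,d_2} (where d_1,d_2 ∉ U) and the following voters: for each i ∈ {1,…,r}, a voter v_i with pos_{v_i}(d_1)=1, pos_{v_i}(d_2)=2, pos_{v_i}(u_i)=r+2, and the candidates of U∖{u_i} placed on positions 3,…,r+1 in an arbitrary order; and for each edge f ∈ F, writing its endpoints as u_i and u_j under an arbitrary fixed choice of order, a voter w_f with pos_{w_f}(d_2)=1, pos_{w_f}(u_i)=2, pos_{w_f}(d_1)=3, pos_{w_f}(u_j)=r+2, and the candidates of U∖{u_i,u_j} placed on positions 4,…,r+1 in an arbitrary order. Then there exists a set Q ⊆ C with |Q| = k such that max_{x∈Q} pos_v(x) − min_{x∈Q} pos_v(x) ≤ r−1 for every voter v of E (i.e., Q is a (q,b)-approximate clone of size exactly b for b = k and q = r−k) if and only if G has an independent set of size k. -/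
/-- Let `G` be a simple graph on `U = {u_1,…,u_r}` (modelled as `Fin r`) and
`3 ≤ k ≤ r`. Consider any election whose candidates are `U ∪ {d₁, d₂}` (candidate type
`Fin r ⊕ Fin 2`, with `d₁ = Sum.inr 0`, `d₂ = Sum.inr 1`) and whose voters are exactly:
a voter `v_i` for each vertex `u_i` with `d₁` on position 1, `d₂` on position 2, `u_i` on
position `r+2` (the other candidates filling positions 3,…,r+1 arbitrarily, which is forced
by bijectivity); and a voter `w_f` for each edge `f`, with endpoints written as `u_i, u_j`
(arbitrary fixed order), having `d₂` on position 1, `u_i` on position 2, `d₁` on position 3,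
`u_j` on position `r+2` (the rest on positions 4,…,r+1 arbitrarily). Then there is a set
`Q ⊆ C` with `|Q| = k` such that every voter's positions on `Q` have spread at most `r−1`
(i.e. `Q` is a `(q,b)`-approximate clone of size exactly `b` for `b = k`, `q = r−k`) iff `G`
has an independent set of size `k`. -/
theorem stmt_4 {r : ℕ} (G : SimpleGraph (Fin r)) (k : ℕ) (hk3 : 3 ≤ k) (hkr : k ≤ r)
    (pos : (Fin r ⊕ ↥G.edgeSet) → (Fin r ⊕ Fin 2) → ℕ)
    (hbij : ∀ v, Set.BijOn (pos v) Set.univ (Set.Icc 1 (r + 2)))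
    (hv : ∀ i : Fin r,
      pos (Sum.inl i) (Sum.inr 0) = 1 ∧
      pos (Sum.inl i) (Sum.inr 1) = 2 ∧
      pos (Sum.inl i) (Sum.inl i) = r + 2)
    (hw : ∀ f : ↥G.edgeSet, ∃ i j : Fin r, G.Adj i j ∧ (f : Sym2 (Fin r)) = s(i, j) ∧
      pos (Sum.inr f) (Sum.inr 1) = 1 ∧
      pos (Sum.inr f) (Sum.inl i) = 2 ∧
      pos (Sum.inr f) (Sum.inr 0) = 3 ∧
      pos (Sum.inr f) (Sum.inl j) = r + 2) :
    (∃ Q : Finset (Fin r ⊕ Fin 2), Q.card = k ∧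
        ∀ v : Fin r ⊕ ↥G.edgeSet, ∀ x ∈ Q, ∀ y ∈ Q,
          (pos v x : ℤ) - (pos v y : ℤ) ≤ (r : ℤ) - 1) ↔
      (∃ I : Finset (Fin r), I.card = k ∧ ∀ i ∈ I, ∀ j ∈ I, ¬ G.Adj i j) := by
  have hinj : ∀ v, Function.Injective (pos v) := fun v x y h =>
    (hbij v).injOn (Set.mem_univ x) (Set.mem_univ y) h
  have hmem : ∀ v x, 1 ≤ pos v x ∧ pos v x ≤ r + 2 := fun v x =>
    (hbij v).mapsTo (Set.mem_univ x)
  have hne : ∀ v (x y : Fin r ⊕ Fin 2), x ≠ y → pos v x ≠ pos v y :=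
    fun v x y h hp => h (hinj v hp)
  constructor
  · rintro ⟨Q, hQcard, hQ⟩
    have hvert : ∃ a : Fin r, Sum.inl a ∈ Q := by
      by_contra h
      push_neg at h
      have hsub : Q ⊆ {Sum.inr 0, Sum.inr 1} := by
        intro x hx
        match x with
        | Sum.inl a => exact absurd hx (h a)
        | Sum.inr b => fin_cases b <;> simp
      have hc := Finset.card_le_card hsub
      have : ({Sum.inr 0, Sum.inr 1} : Finset (Fin r ⊕ Fin 2)).card ≤ 2 :=
        Finset.card_insert_le _ _ |>.trans (by simp)
      omega
    obtain ⟨a, ha⟩ := hvert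
    obtain ⟨h1, h2, h3⟩ := hv a
    have hd1 : (Sum.inr 0 : Fin r ⊕ Fin 2) ∉ Q := by
      intro h
      have := hQ (Sum.inl a) (Sum.inl a) ha (Sum.inr 0) h
      rw [h3, h1] at this
      push_cast at this
      omega
    have hd2 : (Sum.inr 1 : Fin r ⊕ Fin 2) ∉ Q := by
      intro h
      have := hQ (Sum.inl a) (Sum.inl a) ha (Sum.inr 1) h
      rw [h3, h2] at this
      push_cast at this
      omega
    refine ⟨Q.preimage Sum.inl Sum.inl_injective.injOn, ?_, ?_⟩
    · rw [← hQcard]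
      apply Finset.card_bij (fun i _ => Sum.inl i)
      · intro i hi; exact Finset.mem_preimage.mp hi
      · intro i _ j _ h; exact Sum.inl_injective h
      · intro x hx
        match x with
        | Sum.inl b => exact ⟨b, Finset.mem_preimage.mpr hx, rfl⟩
        | Sum.inr b =>
          exfalso; fin_cases b
          · exact hd1 hx
          · exact hd2 hx
    · intro i hi j hj hadj
      have hiQ : Sum.inl i ∈ Q := Finset.mem_preimage.mp hi
      have hjQ : Sum.inl j ∈ Q := Finset.mem_preimage.mp hj
      set f : ↥G.edgeSet := ⟨s(i, j), G.mem_edgeSet.mpr hadj⟩ with hf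
      obtain ⟨i', j', hadj', heq, w1, w2, w3, w4⟩ := hw f
      have heq' : (i = i' ∧ j = j') ∨ (i = j' ∧ j = i') := by
        have : s(i, j) = s(i', j') := heq
        rwa [Sym2.eq_iff] at this
      rcases heq' with ⟨rfl, rfl⟩ | ⟨rfl, rfl⟩
      · have := hQ (Sum.inr f) (Sum.inl j) hjQ (Sum.inl i) hiQ
        rw [w2, w4] at this
        push_cast at this
        omega
      · have := hQ (Sum.inr f) (Sum.inl i) hiQ (Sum.inl j) hjQ
        rw [w2, w4] at this
        push_cast at this
        omega
  · rintro ⟨I, hIcard, hInd⟩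
    refine ⟨I.image Sum.inl, by
      rw [Finset.card_image_of_injective _ Sum.inl_injective]; exact hIcard, ?_⟩
    intro v x hx y hy
    obtain ⟨a, haI, rfl⟩ := Finset.mem_image.mp hx
    obtain ⟨b, hbI, rfl⟩ := Finset.mem_image.mp hy
    match v with
    | Sum.inl i =>
      obtain ⟨h1, h2, h3⟩ := hv i
      have hub := (hmem (Sum.inl i) (Sum.inl a)).2
      have hlb1 := (hmem (Sum.inl i) (Sum.inl b)).1
      have hn1 : pos (Sum.inl i) (Sum.inl b) ≠ 1 := by
        rw [← h1]; exact hne _ _ _ (by simp)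
      have hn2 : pos (Sum.inl i) (Sum.inl b) ≠ 2 := fun h =>
        hne _ (Sum.inl b) (Sum.inr 1) (by simp) (h.trans h2.symm)
      push_cast
      omega
    | Sum.inr f =>
      obtain ⟨i, j, hadj, heq, w1, w2, w3, w4⟩ := hw f
      have hub := (hmem (Sum.inr f) (Sum.inl a)).2
      have hlb := (hmem (Sum.inr f) (Sum.inl b)).1
      by_cases hjI : j ∈ I
      · have hiI : i ∉ I := fun hiI => hInd i hiI j hjI hadj
        have hbn1 : pos (Sum.inr f) (Sum.inl b) ≠ 1 := by
          rw [← w1]; exact hne _ _ _ (by simp)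
        have hbn2 : pos (Sum.inr f) (Sum.inl b) ≠ 2 := fun h =>
          hne _ (Sum.inl b) (Sum.inl i)
            (by simp; rintro rfl; exact hiI hbI) (h.trans w2.symm)
        have hbn3 : pos (Sum.inr f) (Sum.inl b) ≠ 3 := by
          rw [← w3]; exact hne _ _ _ (by simp)
        push_cast
        omega
      · have han : pos (Sum.inr f) (Sum.inl a) ≠ r + 2 := by
          rw [← w4]
          exact hne _ _ _ (by simp; rintro rfl; exact hjI haI)
        have hbn1 : pos (Sum.inr f) (Sum.inl b) ≠ 1 := by
          rw [← w1]; exact hne _ _ _ (by simp)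
        push_cast
        omega
end

section
/- Let G=(U,F) be a simple graph with U={u_1,…,u_r}, let k ≥ 1 and b ≥ 1 be integers with r = k·b, and set q = r − b. Let D = {d_1,…,d_b} be a set of b dummy candidates disjoint from U, and let E=(C,V) be any election with candidate set C = U ∪ D and the following voters: for each i ∈ {1,…,b} and j ∈ {1,…,r}, a voter v_{i,j} with pos(d_i)=1, the candidates of D∖{d_i} on positions 2,…,b in an arbitrary order, the candidates of U∖{u_j} on positions b+1,…,b+r−1 in an arbitrary order, and pos(u_j)=b+r; and for each edge f ∈ F, writing its endpoints as u_i and u_j under an arbitrary fixed choice of order, a voter w_f with the candidates of D∖{d_1} on positions 1,…,b−1 in an arbitrary order, pos(u_i)=b, pos(d_1)=b+1, the candidates of U∖{u_i,u_j} on positions b+2,…,b+r−1 in an arbitrary order, and pos(u_j)=b+r. Then C admits a partition into at most k+1 nonempty parts, each of which is a (q,b)-approximate clone, if and only if U can be partitioned into k independent sets of G, each of size exactly b. -/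
/-- Let `G` be a simple graph on `U = {u_1,…,u_r}` (modelled as `Fin r`),
let `k ≥ 1`, `b ≥ 1` with `r = k·b`, and set `q = r − b`. Consider any election whose
candidates are `U ∪ D` with `D = {d_1,…,d_b}` (candidate type `Fin r ⊕ Fin b`) and whose
voters are exactly: for each `i ∈ [b]`, `j ∈ [r]` a voter `v_{i,j}` with `d_i` on position 1,
the rest of `D` on positions 2,…,b, the rest of `U` on positions b+1,…,b+r−1, and `u_j` on
position `b+r`; and for each edge `f` (endpoints written `u_i, u_j` in an arbitrary fixed
order) a voter `w_f` with `D∖{d_1}` on positions 1,…,b−1, `u_i` on position `b`, `d_1` on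
position `b+1`, `U∖{u_i,u_j}` on positions b+2,…,b+r−1, and `u_j` on position `b+r`.
Then `C` admits a partition into at most `k+1` nonempty parts, each a `(q,b)`-approximate
clone, iff `U` can be partitioned into `k` independent sets of `G`, each of size exactly `b`. -/
theorem stmt_5 {r k b : ℕ} (hk : 1 ≤ k) (hb : 1 ≤ b) (hr : r = k * b)
    (G : SimpleGraph (Fin r))
    (pos : ((Fin b × Fin r) ⊕ ↥G.edgeSet) → (Fin r ⊕ Fin b) → ℕ)
    (hbij : ∀ v, Set.BijOn (pos v) Set.univ (Set.Icc 1 (b + r)))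
    (hv : ∀ (i : Fin b) (j : Fin r),
      pos (Sum.inl (i, j)) (Sum.inr i) = 1 ∧
      pos (Sum.inl (i, j)) (Sum.inl j) = b + r ∧
      (∀ i' : Fin b, i' ≠ i →
        pos (Sum.inl (i, j)) (Sum.inr i') ∈ Set.Icc 2 b) ∧
      (∀ j' : Fin r, j' ≠ j →
        pos (Sum.inl (i, j)) (Sum.inl j') ∈ Set.Icc (b + 1) (b + r - 1)))
    (hw : ∀ f : ↥G.edgeSet, ∃ i j : Fin r, G.Adj i j ∧ (f : Sym2 (Fin r)) = s(i, j) ∧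
      (∀ i' : Fin b, i' ≠ ⟨0, hb⟩ →
        pos (Sum.inr f) (Sum.inr i') ∈ Set.Icc 1 (b - 1)) ∧
      pos (Sum.inr f) (Sum.inl i) = b ∧
      pos (Sum.inr f) (Sum.inr ⟨0, hb⟩) = b + 1 ∧
      (∀ j' : Fin r, j' ≠ i → j' ≠ j →
        pos (Sum.inr f) (Sum.inl j') ∈ Set.Icc (b + 2) (b + r - 1)) ∧
      pos (Sum.inr f) (Sum.inl j) = b + r) :
    (∃ P : Finset (Finset (Fin r ⊕ Fin b)), P.card ≤ k + 1 ∧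
        (∀ X ∈ P, X.Nonempty ∧ X.card ≤ b ∧
          ∀ v, ∀ x ∈ X, ∀ y ∈ X,
            (pos v x : ℤ) - (pos v y : ℤ) ≤ ((r - b : ℕ) : ℤ) + (b : ℤ) - 1) ∧
        (∀ c, ∃ X ∈ P, c ∈ X) ∧
        (∀ X ∈ P, ∀ Y ∈ P, X ≠ Y → Disjoint X Y)) ↔
      (∃ g : Fin r → Fin k,
        (∀ c : Fin k, (Finset.univ.filter (fun j => g j = c)).card = b) ∧
        (∀ i j : Fin r, g i = g j → ¬ G.Adj i j)) := by
  classical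
  have hbr : b ≤ r := by
    calc b = 1 * b := (one_mul b).symm
    _ ≤ k * b := Nat.mul_le_mul_right b hk
    _ = r := hr.symm
  have hr1 : 1 ≤ r := le_trans hb hbr
  constructor
  · rintro ⟨P, hPcard, hparts, hcover, hdisj⟩
    -- Purity: no part contains both a dummy and a vertex candidate
    have hpure : ∀ X ∈ P, ∀ (i : Fin b) (j : Fin r),
        Sum.inr i ∈ X → Sum.inl j ∈ X → False := by
      intro X hX i j hi hj
      have hspread := (hparts X hX).2.2 (Sum.inl (i, j)) (Sum.inl j) hj (Sum.inr i) hi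
      obtain ⟨h1, h2, -, -⟩ := hv i j
      rw [h1, h2] at hspread
      omega
    -- Counting
    have hsum : ∑ X ∈ P, X.card = r + b := by
      have hU : P.biUnion id = Finset.univ := by
        apply Finset.eq_univ_of_forall
        intro c
        obtain ⟨X, hX, hc⟩ := hcover c
        exact Finset.mem_biUnion.mpr ⟨X, hX, hc⟩
      have hcb := Finset.card_biUnion (s := P) (t := id)
        (fun X hX Y hY hne => hdisj X hX Y hY hne)
      rw [hU] at hcb
      simp only [Finset.card_univ, Fintype.card_sum, Fintype.card_fin, id] at hcb
      exact hcb.symm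
    have hPub : ∑ X ∈ P, X.card ≤ P.card * b := by
      calc ∑ X ∈ P, X.card ≤ ∑ _X ∈ P, b := Finset.sum_le_sum (fun X hX => (hparts X hX).2.1)
      _ = P.card * b := by rw [Finset.sum_const, smul_eq_mul]
    have hkb : (k + 1) * b = k * b + b := by ring
    have hPcard' : P.card = k + 1 := by
      have h1 : (k + 1) * b ≤ P.card * b := by omega
      have h2 := Nat.le_of_mul_le_mul_right h1 (by omega : 0 < b)
      omega
    have hcards : ∀ X ∈ P, X.card = b := by
      by_contra hcon
      push_neg at hcon
      obtain ⟨X0, hX0, hne⟩ := hcon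
      have hlt : ∑ X ∈ P, X.card < P.card * b := by
        have h := Finset.sum_lt_sum (s := P) (f := fun X => X.card) (g := fun _ => b)
          (fun X hX => (hparts X hX).2.1) ⟨X0, hX0, lt_of_le_of_ne (hparts X0 hX0).2.1 hne⟩
        simpa [Finset.sum_const, smul_eq_mul] using h
      rw [hPcard'] at hlt
      omega
    -- Exactly one all-dummy part, k all-vertex parts
    set Qu := P.filter (fun X => ∃ j : Fin r, Sum.inl j ∈ X) with hQu_def
    set Qd := P.filter (fun X => ∃ i : Fin b, Sum.inr i ∈ X) with hQd_def
    have hQdcard : Qd.card = 1 := by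
      have hbU : Qd.biUnion id = Finset.univ.image (Sum.inr : Fin b → Fin r ⊕ Fin b) := by
        ext x
        simp only [Finset.mem_biUnion, Finset.mem_image, Finset.mem_univ, true_and, id]
        constructor
        · rintro ⟨X, hX, hxX⟩
          rw [hQd_def, Finset.mem_filter] at hX
          obtain ⟨hXP, i0, hi0⟩ := hX
          cases x with
          | inl j => exact (hpure X hXP i0 j hi0 hxX).elim
          | inr i => exact ⟨i, rfl⟩
        · rintro ⟨i, rfl⟩
          obtain ⟨X, hX, hc⟩ := hcover (Sum.inr i)
          exact ⟨X, Finset.mem_filter.mpr ⟨hX, ⟨i, hc⟩⟩, hc⟩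
      have hcardU := Finset.card_biUnion (s := Qd) (t := id)
        (fun X hX Y hY hne =>
          hdisj X (Finset.mem_filter.mp hX).1 Y (Finset.mem_filter.mp hY).1 hne)
      rw [hbU, Finset.card_image_of_injective _ Sum.inr_injective,
        Finset.card_univ, Fintype.card_fin] at hcardU
      have hsum' : ∑ X ∈ Qd, (id X).card = Qd.card * b := by
        rw [Finset.sum_congr rfl
          (fun X hX => by simpa using hcards X (Finset.mem_filter.mp hX).1),
          Finset.sum_const, smul_eq_mul]
      rw [hsum'] at hcardU
      have h1b : 1 * b = Qd.card * b := by omega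
      exact (Nat.eq_of_mul_eq_mul_right (by omega) h1b).symm
    have hQuQd : Qu ∪ Qd = P := by
      apply Finset.Subset.antisymm
      · exact Finset.union_subset (Finset.filter_subset _ _) (Finset.filter_subset _ _)
      · intro X hX
        obtain ⟨x, hx⟩ := (hparts X hX).1
        cases x with
        | inl j => exact Finset.mem_union_left _ (Finset.mem_filter.mpr ⟨hX, ⟨j, hx⟩⟩)
        | inr i => exact Finset.mem_union_right _ (Finset.mem_filter.mpr ⟨hX, ⟨i, hx⟩⟩)
    have hQuQd_disj : Disjoint Qu Qd := by
      rw [Finset.disjoint_left]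
      intro X hXu hXd
      obtain ⟨hXP, j, hj⟩ := Finset.mem_filter.mp hXu
      obtain ⟨-, i, hi⟩ := Finset.mem_filter.mp hXd
      exact hpure X hXP i j hi hj
    have hQucard : Qu.card = k := by
      have hcu := Finset.card_union_of_disjoint hQuQd_disj
      rw [hQuQd, hPcard', hQdcard] at hcu
      omega
    choose Xof hXofP hXofmem using hcover
    have hXu : ∀ j : Fin r, Xof (Sum.inl j) ∈ Qu :=
      fun j => Finset.mem_filter.mpr ⟨hXofP _, ⟨j, hXofmem _⟩⟩
    have huniq : ∀ (c : Fin r ⊕ Fin b) (Y : Finset (Fin r ⊕ Fin b)),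
        Y ∈ P → c ∈ Y → Y = Xof c := by
      intro c Y hY hcY
      by_contra hne
      exact Finset.disjoint_left.mp (hdisj Y hY (Xof c) (hXofP c) hne) hcY (hXofmem c)
    let e : {X // X ∈ Qu} ≃ Fin k := Qu.equivFin.trans (finCongr hQucard)
    refine ⟨fun j => e ⟨Xof (Sum.inl j), hXu j⟩, ?_, ?_⟩
    · intro c
      set Xc := e.symm c with hXc_def
      have hXcP : (Xc : Finset (Fin r ⊕ Fin b)) ∈ P := (Finset.mem_filter.mp Xc.2).1
      have hmemiff : ∀ j : Fin r,
          e ⟨Xof (Sum.inl j), hXu j⟩ = c ↔ Sum.inl j ∈ (Xc : Finset (Fin r ⊕ Fin b)) := by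
        intro j
        constructor
        · intro h
          have h2 : (⟨Xof (Sum.inl j), hXu j⟩ : {X // X ∈ Qu}) = Xc := by
            rw [hXc_def, ← h, Equiv.symm_apply_apply]
          have h3 : Xof (Sum.inl j) = (Xc : Finset (Fin r ⊕ Fin b)) := congrArg Subtype.val h2
          rw [← h3]
          exact hXofmem _
        · intro h
          have h3 : (Xc : Finset (Fin r ⊕ Fin b)) = Xof (Sum.inl j) := huniq _ _ hXcP h
          have h2 : (⟨Xof (Sum.inl j), hXu j⟩ : {X // X ∈ Qu}) = Xc := Subtype.ext h3.symm
          rw [h2, hXc_def, Equiv.apply_symm_apply]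
      have himg : (Xc : Finset (Fin r ⊕ Fin b)) =
          (Finset.univ.filter
            (fun j => Sum.inl j ∈ (Xc : Finset (Fin r ⊕ Fin b)))).image Sum.inl := by
        ext x
        simp only [Finset.mem_image, Finset.mem_filter, Finset.mem_univ, true_and]
        constructor
        · intro hx
          cases x with
          | inl j => exact ⟨j, hx, rfl⟩
          | inr i =>
            obtain ⟨-, j0, hj0⟩ := Finset.mem_filter.mp Xc.2
            exact (hpure _ hXcP i j0 hx hj0).elim
        · rintro ⟨j, hj, rfl⟩
          exact hj
      calc (Finset.univ.filter fun j => e ⟨Xof (Sum.inl j), hXu j⟩ = c).card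
          = (Finset.univ.filter
              fun j => Sum.inl j ∈ (Xc : Finset (Fin r ⊕ Fin b))).card := by
            apply congrArg Finset.card
            apply Finset.filter_congr
            intro j _
            simp only [hmemiff j]
        _ = (Xc : Finset (Fin r ⊕ Fin b)).card := by
            conv_rhs => rw [himg]
            rw [Finset.card_image_of_injective _ Sum.inl_injective]
        _ = b := hcards _ hXcP
    · intro i j hgij hadj
      have hij : Xof (Sum.inl i) = Xof (Sum.inl j) :=
        congrArg Subtype.val (e.injective hgij)
      have hfmem : s(i, j) ∈ G.edgeSet := G.mem_edgeSet.mpr hadj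
      obtain ⟨i0, j0, hadj0, hf, -, hpi0, -, -, hpj0⟩ := hw ⟨s(i, j), hfmem⟩
      have hiX : Sum.inl i ∈ Xof (Sum.inl i) := hXofmem _
      have hjX : Sum.inl j ∈ Xof (Sum.inl i) := by rw [hij]; exact hXofmem _
      have hfeq : s(i, j) = s(i0, j0) := hf
      rw [Sym2.eq_iff] at hfeq
      have hmem0 : Sum.inl i0 ∈ Xof (Sum.inl i) ∧ Sum.inl j0 ∈ Xof (Sum.inl i) := by
        rcases hfeq with ⟨rfl, rfl⟩ | ⟨rfl, rfl⟩
        · exact ⟨hiX, hjX⟩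
        · exact ⟨hjX, hiX⟩
      have hspread := (hparts _ (hXofP (Sum.inl i))).2.2 (Sum.inr ⟨s(i, j), hfmem⟩)
        (Sum.inl j0) hmem0.2 (Sum.inl i0) hmem0.1
      rw [hpi0, hpj0] at hspread
      omega
  · rintro ⟨g, hgcard, hgind⟩
    set Dpart : Finset (Fin r ⊕ Fin b) := Finset.univ.image Sum.inr with hD_def
    set cls : Fin k → Finset (Fin r ⊕ Fin b) :=
      fun c => (Finset.univ.filter (fun j => g j = c)).image Sum.inl with hcls_def
    refine ⟨insert Dpart (Finset.univ.image cls), ?_, ?_, ?_, ?_⟩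
    · calc (insert Dpart (Finset.univ.image cls)).card
          ≤ (Finset.univ.image cls).card + 1 := Finset.card_insert_le _ _
      _ ≤ k + 1 := by
        have h := Finset.card_image_le (s := (Finset.univ : Finset (Fin k))) (f := cls)
        simp only [Finset.card_univ, Fintype.card_fin] at h
        omega
    · intro X hX
      rcases Finset.mem_insert.mp hX with rfl | hX'
      · -- the dummy part
        refine ⟨⟨Sum.inr ⟨0, hb⟩, Finset.mem_image.mpr ⟨⟨0, hb⟩, Finset.mem_univ _, rfl⟩⟩, ?_, ?_⟩
        · rw [Finset.card_image_of_injective _ Sum.inr_injective, Finset.card_univ,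
            Fintype.card_fin]
        · intro v x hx y hy
          obtain ⟨i1, -, rfl⟩ := Finset.mem_image.mp hx
          obtain ⟨i2, -, rfl⟩ := Finset.mem_image.mp hy
          obtain ⟨i, j⟩ | f := v
          · obtain ⟨h1, h2, h3, h4⟩ := hv i j
            have bnd : ∀ i' : Fin b, 1 ≤ pos (Sum.inl (i, j)) (Sum.inr i') ∧
                pos (Sum.inl (i, j)) (Sum.inr i') ≤ b := by
              intro i'
              by_cases hcase : i' = i
              · subst hcase; rw [h1]; exact ⟨le_refl 1, hb⟩
              · have hm := h3 i' hcase
                rw [Set.mem_Icc] at hm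
                omega
            have b1 := bnd i1
            have b2 := bnd i2
            omega
          · obtain ⟨i0, j0, hadj0, -, hDrest, -, hd1, -, -⟩ := hw f
            have hkne : g i0 ≠ g j0 := fun h => hgind i0 j0 h hadj0
            have h2b : b + 1 ≤ r := by
              have h2k : 2 ≤ k := by
                by_contra hlt
                push_neg at hlt
                have hk1 : k = 1 := by omega
                apply hkne
                subst hk1
                exact Subsingleton.elim _ _
              have : 2 * b ≤ k * b := Nat.mul_le_mul_right b h2k
              omega
            have bnd : ∀ i' : Fin b, 1 ≤ pos (Sum.inr f) (Sum.inr i') ∧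
                pos (Sum.inr f) (Sum.inr i') ≤ b + 1 := by
              intro i'
              by_cases hcase : i' = (⟨0, hb⟩ : Fin b)
              · subst hcase; rw [hd1]; omega
              · have hm := hDrest i' hcase
                rw [Set.mem_Icc] at hm
                omega
            have b1 := bnd i1
            have b2 := bnd i2
            omega
      · -- a vertex-class part
        obtain ⟨c, -, rfl⟩ := Finset.mem_image.mp hX'
        have hfil : (Finset.univ.filter (fun j => g j = c)).Nonempty :=
          Finset.card_pos.mp (by rw [hgcard c]; omega)
        refine ⟨hfil.image _, ?_, ?_⟩
        · rw [hcls_def]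
          simp only []
          rw [Finset.card_image_of_injective _ Sum.inl_injective, hgcard c]
        · intro v x hx y hy
          rw [hcls_def] at hx hy
          simp only [Finset.mem_image, Finset.mem_filter, Finset.mem_univ, true_and] at hx hy
          obtain ⟨j1, hgj1, rfl⟩ := hx
          obtain ⟨j2, hgj2, rfl⟩ := hy
          obtain ⟨i, j⟩ | f := v
          · obtain ⟨h1, h2, h3, h4⟩ := hv i j
            have bnd : ∀ j' : Fin r, b + 1 ≤ pos (Sum.inl (i, j)) (Sum.inl j') ∧
                pos (Sum.inl (i, j)) (Sum.inl j') ≤ b + r := by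
              intro j'
              by_cases hcase : j' = j
              · subst hcase; rw [h2]; omega
              · have hm := h4 j' hcase
                rw [Set.mem_Icc] at hm
                omega
            have b1 := bnd j1
            have b2 := bnd j2
            omega
          · obtain ⟨i0, j0, hadj0, -, -, hpi0, -, hUrest, hpj0⟩ := hw f
            have hkne : g i0 ≠ g j0 := fun h => hgind i0 j0 h hadj0
            by_cases hc : g i0 = c
            · have hbnd : ∀ j' : Fin r, g j' = c →
                  b ≤ pos (Sum.inr f) (Sum.inl j') ∧
                  pos (Sum.inr f) (Sum.inl j') ≤ b + r - 1 := by
                intro j' hgj'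
                have hne0 : j' ≠ j0 := fun h => hkne (by rw [← h, hgj', hc])
                by_cases hcase : j' = i0
                · subst hcase; rw [hpi0]; omega
                · have hm := hUrest j' hcase hne0
                  rw [Set.mem_Icc] at hm
                  omega
              have b1 := hbnd j1 hgj1
              have b2 := hbnd j2 hgj2
              omega
            · have hbnd : ∀ j' : Fin r, g j' = c →
                  b + 1 ≤ pos (Sum.inr f) (Sum.inl j') ∧
                  pos (Sum.inr f) (Sum.inl j') ≤ b + r := by
                intro j' hgj'
                have hne0 : j' ≠ i0 := fun h => hc (by rw [← h, hgj'])
                by_cases hcase : j' = j0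
                · subst hcase; rw [hpj0]; omega
                · have hm := hUrest j' hne0 hcase
                  rw [Set.mem_Icc] at hm
                  omega
              have b1 := hbnd j1 hgj1
              have b2 := hbnd j2 hgj2
              omega
    · intro c
      cases c with
      | inl j =>
        exact ⟨cls (g j),
          Finset.mem_insert_of_mem (Finset.mem_image.mpr ⟨g j, Finset.mem_univ _, rfl⟩),
          Finset.mem_image.mpr ⟨j, Finset.mem_filter.mpr ⟨Finset.mem_univ _, rfl⟩, rfl⟩⟩
      | inr i =>
        exact ⟨Dpart, Finset.mem_insert_self _ _,
          Finset.mem_image.mpr ⟨i, Finset.mem_univ _, rfl⟩⟩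
    · have hDc : ∀ c : Fin k, Disjoint Dpart (cls c) := by
        intro c
        rw [Finset.disjoint_left]
        intro a ha hb'
        obtain ⟨i1, -, rfl⟩ := Finset.mem_image.mp ha
        obtain ⟨j1, -, hj1⟩ := Finset.mem_image.mp hb'
        exact Sum.inl_ne_inr hj1
      have hcc : ∀ c c' : Fin k, c ≠ c' → Disjoint (cls c) (cls c') := by
        intro c c' hne
        rw [Finset.disjoint_left]
        intro a ha hb'
        obtain ⟨j1, hj1, rfl⟩ := Finset.mem_image.mp ha
        obtain ⟨j2, hj2, hj2e⟩ := Finset.mem_image.mp hb'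
        rw [Finset.mem_filter] at hj1 hj2
        have : j2 = j1 := Sum.inl_injective hj2e
        subst this
        exact hne (hj1.2 ▸ hj2.2 ▸ rfl)
      intro X hX Y hY hne
      rcases Finset.mem_insert.mp hX with rfl | hX' <;>
        rcases Finset.mem_insert.mp hY with h | hY'
      · exact absurd h.symm hne
      · obtain ⟨c, -, rfl⟩ := Finset.mem_image.mp hY'
        exact hDc c
      · obtain ⟨c, -, rfl⟩ := Finset.mem_image.mp hX'
        rw [h] at hne ⊢
        exact (hDc c).symm
      · obtain ⟨c, -, rfl⟩ := Finset.mem_image.mp hX'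
        obtain ⟨c', -, rfl⟩ := Finset.mem_image.mp hY'
        exact hcc c c' (fun h => hne (h ▸ rfl))
end

section
/- Let E=(C,V) be an election, let q ≥ 0, b ≥ 1 and t ≥ 0 be integers, and fix a voter v ∈ V. Then C admits a partition into at most t nonempty parts, each a (q,b)-approximate clone, if and only if C admits a partition into segments S_1,…,S_{t'} (with respect to v) such that no S_i is enclosed by another S_j (with respect to v) and size(S_1)+⋯+size(S_{t'}) ≤ t. -/
/-- `X` is a `(q,b)`-approximate clone in the election given by `pos`:
nonempty, of size at most `b`, and every voter's positions on `X` have spread at most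
`q + b − 1`. -/
def IsApproxClone {C V : Type*} (pos : V → C → ℕ) (q b : ℕ) (X : Finset C) : Prop :=
  X.Nonempty ∧ X.card ≤ b ∧
    ∀ u : V, ∀ x ∈ X, ∀ y ∈ X, (pos u x : ℤ) - (pos u y : ℤ) ≤ (q : ℤ) + (b : ℤ) - 1

/-- `P` is enclosed by `Q` with respect to the position function `p` of a fixed voter:
every member of `P` lies strictly between the minimum and the maximum position of `Q`. -/
def EnclosedBy {C : Type*} (p : C → ℕ) (P Q : Finset C) : Prop :=
  ∀ c ∈ P, (∃ x ∈ Q, p x < p c) ∧ (∃ y ∈ Q, p c < p y)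

/-- `(Q, Ps)` is an implementation of the segment `S` (with respect to the fixed voter whose
position function is `pos v`): `Q` is a `(q,b)`-approximate clone (the base), the members of
`Ps` are `(q,b)`-approximate clones each enclosed by `Q`, and they partition `S`.
Its size is `Ps.card + 1`. -/
def IsImplementation {C V : Type*} [DecidableEq C] (pos : V → C → ℕ) (q b : ℕ) (v : V)
    (S Q : Finset C) (Ps : Finset (Finset C)) : Prop :=
  IsApproxClone pos q b Q ∧
  (∀ P ∈ Ps, IsApproxClone pos q b P ∧ EnclosedBy (pos v) P Q) ∧
  (∀ P ∈ Ps, Disjoint P Q) ∧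
  (∀ P ∈ Ps, ∀ P' ∈ Ps, P ≠ P' → Disjoint P P') ∧
  Q ∪ Ps.sup id = S

/-- `S` is a segment (with respect to voter `v`): it has an implementation. -/
def IsSegment {C V : Type*} [DecidableEq C] (pos : V → C → ℕ) (q b : ℕ) (v : V)
    (S : Finset C) : Prop :=
  ∃ Q Ps, IsImplementation pos q b v S Q Ps

/-- `size(S)`: the minimum size of an implementation of the segment `S`. -/
noncomputable def segSize {C V : Type*} [DecidableEq C] (pos : V → C → ℕ) (q b : ℕ) (v : V)
    (S : Finset C) : ℕ :=
  sInf {n : ℕ | ∃ Q Ps, IsImplementation pos q b v S Q Ps ∧ n = Ps.card + 1}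

lemma enc_trans {C : Type*} (p : C → ℕ) {X Y Z : Finset C}
    (h1 : EnclosedBy p X Y) (h2 : EnclosedBy p Y Z) : EnclosedBy p X Z := by
  intro c hc
  obtain ⟨⟨x, hx, hxc⟩, ⟨y, hy, hcy⟩⟩ := h1 c hc
  obtain ⟨⟨x', hx', hx'x⟩, -⟩ := h2 x hx
  obtain ⟨-, ⟨y', hy', hyy'⟩⟩ := h2 y hy
  exact ⟨⟨x', hx', lt_trans hx'x hxc⟩, ⟨y', hy', lt_trans hcy hyy'⟩⟩

lemma enc_irrefl {C : Type*} (p : C → ℕ) {X : Finset C} (hX : X.Nonempty) :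
    ¬ EnclosedBy p X X := by
  intro h
  obtain ⟨c, hc, hmax⟩ := X.exists_max_image p hX
  obtain ⟨-, y, hy, hcy⟩ := h c hc
  exact absurd (hmax y hy) (not_le.2 hcy)

lemma exists_max_enc {C : Type*} [DecidableEq C] (p : C → ℕ) (P : Finset (Finset C))
    (hne : ∀ X ∈ P, X.Nonempty) (X : Finset C) (hX : X ∈ P) :
    ∃ Q ∈ P, (X = Q ∨ EnclosedBy p X Q) ∧ ∀ Y ∈ P, ¬ EnclosedBy p Q Y := by
  classical
  suffices h : ∀ n, ∀ X ∈ P, (P.filter (fun Y => EnclosedBy p X Y)).card ≤ n →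
      ∃ Q ∈ P, (X = Q ∨ EnclosedBy p X Q) ∧ ∀ Y ∈ P, ¬ EnclosedBy p Q Y from
    h _ X hX le_rfl
  intro n
  induction n with
  | zero =>
    intro X hX hcard
    refine ⟨X, hX, Or.inl rfl, fun Y hY hE => ?_⟩
    have hmem : Y ∈ P.filter (fun Y => EnclosedBy p X Y) := Finset.mem_filter.2 ⟨hY, hE⟩
    have := Finset.card_pos.2 ⟨Y, hmem⟩
    omega
  | succ n ih =>
    intro X hX hcard
    by_cases hmax : ∀ Y ∈ P, ¬ EnclosedBy p X Y
    · exact ⟨X, hX, Or.inl rfl, hmax⟩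
    · push_neg at hmax
      obtain ⟨Y, hY, hXY⟩ := hmax
      have hss : P.filter (fun Z => EnclosedBy p Y Z) ⊆ P.filter (fun Z => EnclosedBy p X Z) := by
        intro Z hZ
        rw [Finset.mem_filter] at *
        exact ⟨hZ.1, enc_trans p hXY hZ.2⟩
      have hssub : P.filter (fun Z => EnclosedBy p Y Z) ⊂ P.filter (fun Z => EnclosedBy p X Z) := by
        rw [Finset.ssubset_iff_of_subset hss]
        refine ⟨Y, Finset.mem_filter.2 ⟨hY, hXY⟩, fun hmem => ?_⟩
        exact enc_irrefl p (hne Y hY) (Finset.mem_filter.1 hmem).2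
      have := Finset.card_lt_card hssub
      obtain ⟨Q, hQ, hor, hmaxQ⟩ := ih Y hY (by omega)
      refine ⟨Q, hQ, Or.inr ?_, hmaxQ⟩
      rcases hor with rfl | h
      · exact hXY
      · exact enc_trans p hXY h

/-- Let `(C,V)` be an election, `q ≥ 0`, `b ≥ 1`, `t ≥ 0`, and fix a voter
`v`. Then `C` admits a partition into at most `t` nonempty parts, each a `(q,b)`-approximate
clone, iff `C` admits a partition into segments (w.r.t. `v`) none of which is enclosed by
another, whose sizes sum to at most `t`. -/
theorem stmt_7 {C V : Type*} [Fintype C] [DecidableEq C]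
    (pos : V → C → ℕ)
    (hbij : ∀ v : V, Set.BijOn (pos v) Set.univ (Set.Icc 1 (Fintype.card C)))
    (q b t : ℕ) (hb : 1 ≤ b) (v : V) :
    (∃ P : Finset (Finset C), P.card ≤ t ∧
        (∀ X ∈ P, IsApproxClone pos q b X) ∧
        (∀ c : C, ∃ X ∈ P, c ∈ X) ∧
        (∀ X ∈ P, ∀ Y ∈ P, X ≠ Y → Disjoint X Y)) ↔
      (∃ 𝒮 : Finset (Finset C),
        (∀ S ∈ 𝒮, IsSegment pos q b v S) ∧
        (∀ c : C, ∃ S ∈ 𝒮, c ∈ S) ∧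
        (∀ S ∈ 𝒮, ∀ S' ∈ 𝒮, S ≠ S' → Disjoint S S') ∧
        (∀ S ∈ 𝒮, ∀ S' ∈ 𝒮, S ≠ S' → ¬ EnclosedBy (pos v) S S') ∧
        ∑ S ∈ 𝒮, segSize pos q b v S ≤ t) := by
  classical
  set p := pos v with hp
  constructor
  · -- clone partition → segment partition
    rintro ⟨P, hPt, hclone, hcover, hdisj⟩
    have hne : ∀ X ∈ P, X.Nonempty := fun X hX => (hclone X hX).1
    have hgex : ∀ X : Finset C, ∃ Q : Finset C, X ∈ P →
        Q ∈ P ∧ (X = Q ∨ EnclosedBy p X Q) ∧ ∀ Y ∈ P, ¬ EnclosedBy p Q Y := by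
      intro X
      by_cases hX : X ∈ P
      · obtain ⟨Q, hQ, h1, h2⟩ := exists_max_enc p P hne X hX
        exact ⟨Q, fun _ => ⟨hQ, h1, h2⟩⟩
      · exact ⟨∅, fun h => absurd h hX⟩
    choose g hg using hgex
    set M : Finset (Finset C) := P.filter (fun Q => ∀ Y ∈ P, ¬ EnclosedBy p Q Y) with hM
    have hMP : ∀ Q ∈ M, Q ∈ P := fun Q hQ => (Finset.mem_filter.1 hQ).1
    have hMmax : ∀ Q ∈ M, ∀ Y ∈ P, ¬ EnclosedBy p Q Y :=
      fun Q hQ => (Finset.mem_filter.1 hQ).2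
    have hgM : ∀ X ∈ P, g X ∈ M := fun X hX =>
      Finset.mem_filter.2 ⟨(hg X hX).1, (hg X hX).2.2⟩
    have hgfix : ∀ Q ∈ M, g Q = Q := by
      intro Q hQ
      rcases (hg Q (hMP Q hQ)).2.1 with h | h
      · exact h.symm
      · exact absurd h (hMmax Q hQ (g Q) (hg Q (hMP Q hQ)).1)
    set asg : Finset C → Finset (Finset C) :=
      fun Q => (P.filter (fun X => g X = Q)).erase Q with hasg
    set seg : Finset C → Finset C := fun Q => Q ∪ (asg Q).sup id with hsegdef
    have hasgmem : ∀ Q, ∀ X ∈ asg Q, X ∈ P ∧ g X = Q ∧ X ≠ Q := by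
      intro Q X hX
      have h1 := Finset.mem_of_mem_erase hX
      rw [Finset.mem_filter] at h1
      exact ⟨h1.1, h1.2, Finset.ne_of_mem_erase hX⟩
    have hasgenc : ∀ Q ∈ M, ∀ X ∈ asg Q, EnclosedBy p X Q := by
      intro Q hQ X hX
      obtain ⟨hXP, hgX, hXne⟩ := hasgmem Q X hX
      rcases (hg X hXP).2.1 with h | h
      · exact absurd (h.trans hgX) hXne
      · rwa [hgX] at h
    have hImpl : ∀ Q ∈ M, IsImplementation pos q b v (seg Q) Q (asg Q) := by
      intro Q hQ
      refine ⟨hclone Q (hMP Q hQ), ?_, ?_, ?_, rfl⟩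
      · intro X hX
        exact ⟨hclone X (hasgmem Q X hX).1, hasgenc Q hQ X hX⟩
      · intro X hX
        exact hdisj X (hasgmem Q X hX).1 Q (hMP Q hQ) (hasgmem Q X hX).2.2
      · intro X hX X' hX' hne'
        exact hdisj X (hasgmem Q X hX).1 X' (hasgmem Q X' hX').1 hne'
    have hsize : ∀ Q ∈ M, segSize pos q b v (seg Q) ≤ (asg Q).card + 1 := by
      intro Q hQ
      exact Nat.sInf_le ⟨Q, asg Q, hImpl Q hQ, rfl⟩
    have hsubQ : ∀ Q : Finset C, Q ⊆ seg Q := fun Q => Finset.subset_union_left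
    have hmemseg : ∀ Q ∈ M, ∀ c ∈ seg Q, ∃ X, X ∈ P ∧ g X = Q ∧ c ∈ X := by
      intro Q hQ c hc
      rcases Finset.mem_union.1 hc with h | h
      · exact ⟨Q, hMP Q hQ, hgfix Q hQ, h⟩
      · rw [Finset.mem_sup] at h
        obtain ⟨X, hX, hcX⟩ := h
        exact ⟨X, (hasgmem Q X hX).1, (hasgmem Q X hX).2.1, hcX⟩
    have hsegdisj : ∀ Q ∈ M, ∀ Q' ∈ M, Q ≠ Q' → Disjoint (seg Q) (seg Q') := by
      intro Q hQ Q' hQ' hne'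
      rw [Finset.disjoint_left]
      intro c h1 h2
      obtain ⟨X, hXP, hgX, hcX⟩ := hmemseg Q hQ c h1
      obtain ⟨X', hX'P, hgX', hcX'⟩ := hmemseg Q' hQ' c h2
      by_cases hXX : X = X'
      · subst hXX
        exact hne' (hgX.symm.trans hgX')
      · exact Finset.disjoint_left.1 (hdisj X hXP X' hX'P hXX) hcX hcX'
    have hseginj : ∀ Q ∈ M, ∀ Q' ∈ M, seg Q = seg Q' → Q = Q' := by
      intro Q hQ Q' hQ' heq
      by_contra hne'
      have hd := hsegdisj Q hQ Q' hQ' hne'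
      rw [heq] at hd
      obtain ⟨c, hc⟩ := hne Q (hMP Q hQ)
      have hcm : c ∈ seg Q' := heq ▸ hsubQ Q hc
      exact Finset.disjoint_left.1 hd hcm hcm
    refine ⟨M.image seg, ?_, ?_, ?_, ?_, ?_⟩
    · intro S hS
      obtain ⟨Q, hQ, rfl⟩ := Finset.mem_image.1 hS
      exact ⟨Q, asg Q, hImpl Q hQ⟩
    · intro c
      obtain ⟨X, hXP, hcX⟩ := hcover c
      refine ⟨seg (g X), Finset.mem_image_of_mem seg (hgM X hXP), ?_⟩
      by_cases hfix : X = g X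
      · exact Finset.mem_union_left _ (hfix ▸ hcX)
      · have hXa : X ∈ asg (g X) :=
          Finset.mem_erase.2 ⟨hfix, Finset.mem_filter.2 ⟨hXP, rfl⟩⟩
        exact Finset.mem_union_right _ (Finset.mem_sup.2 ⟨X, hXa, hcX⟩)
    · intro S hS S' hS' hne'
      obtain ⟨Q, hQ, rfl⟩ := Finset.mem_image.1 hS
      obtain ⟨Q', hQ', rfl⟩ := Finset.mem_image.1 hS'
      exact hsegdisj Q hQ Q' hQ' (fun h => hne' (h ▸ rfl))
    · intro S hS S' hS' hne' hE
      obtain ⟨Q, hQ, rfl⟩ := Finset.mem_image.1 hS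
      obtain ⟨Q', hQ', rfl⟩ := Finset.mem_image.1 hS'
      apply hMmax Q hQ Q' (hMP Q' hQ')
      intro c hc
      obtain ⟨⟨x, hx, hlt⟩, ⟨y, hy, hlt'⟩⟩ := hE c (hsubQ Q hc)
      constructor
      · rcases Finset.mem_union.1 hx with h | h
        · exact ⟨x, h, hlt⟩
        · rw [Finset.mem_sup] at h
          obtain ⟨X, hXa, hxX⟩ := h
          obtain ⟨⟨x', hx', hlt2⟩, -⟩ := hasgenc Q' hQ' X hXa x hxX
          exact ⟨x', hx', lt_trans hlt2 hlt⟩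
      · rcases Finset.mem_union.1 hy with h | h
        · exact ⟨y, h, hlt'⟩
        · rw [Finset.mem_sup] at h
          obtain ⟨X, hXa, hyX⟩ := h
          obtain ⟨-, ⟨y', hy', hlt2⟩⟩ := hasgenc Q' hQ' X hXa y hyX
          exact ⟨y', hy', lt_trans hlt' hlt2⟩
    · rw [Finset.sum_image (fun Q hQ Q' hQ' h => hseginj Q hQ Q' hQ' h)]
      calc ∑ Q ∈ M, segSize pos q b v (seg Q)
          ≤ ∑ Q ∈ M, ((asg Q).card + 1) := Finset.sum_le_sum (fun Q hQ => hsize Q hQ)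
        _ = ∑ Q ∈ M, (P.filter (fun X => g X = Q)).card := by
            apply Finset.sum_congr rfl
            intro Q hQ
            have hQmem : Q ∈ P.filter (fun X => g X = Q) :=
              Finset.mem_filter.2 ⟨hMP Q hQ, hgfix Q hQ⟩
            have hc1 : (asg Q).card = (P.filter (fun X => g X = Q)).card - 1 :=
              Finset.card_erase_of_mem hQmem
            have hc2 := Finset.card_pos.2 ⟨Q, hQmem⟩
            omega
        _ = P.card := (Finset.card_eq_sum_card_fiberwise (fun X hX => hgM X hX)).symm
        _ ≤ t := hPt
  · -- segment partition → clone partition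
    rintro ⟨𝒮, hseg, hcov, hdisjS, -, hsum⟩
    have hex : ∀ S : Finset C, ∃ QP : Finset C × Finset (Finset C), S ∈ 𝒮 →
        IsImplementation pos q b v S QP.1 QP.2 ∧ QP.2.card + 1 = segSize pos q b v S := by
      intro S
      by_cases hS : S ∈ 𝒮
      · have hne2 : {n : ℕ | ∃ Q Ps, IsImplementation pos q b v S Q Ps ∧
            n = Ps.card + 1}.Nonempty := by
          obtain ⟨Q, Ps, h⟩ := hseg S hS
          exact ⟨Ps.card + 1, Q, Ps, h, rfl⟩
        obtain ⟨Q, Ps, h1, h2⟩ := Nat.sInf_mem hne2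
        exact ⟨(Q, Ps), fun _ => ⟨h1, h2.symm⟩⟩
      · exact ⟨(∅, ∅), fun h => absurd h hS⟩
    choose f hf using hex
    have himpl : ∀ S ∈ 𝒮, IsImplementation pos q b v S (f S).1 (f S).2 :=
      fun S hS => (hf S hS).1
    have hsub : ∀ S ∈ 𝒮, ∀ X ∈ insert (f S).1 (f S).2, X ⊆ S := by
      intro S hS X hX
      obtain ⟨hQ, hPs, hd1, hd2, hu⟩ := himpl S hS
      have h1 : X ⊆ (f S).1 ∪ (f S).2.sup id := by
        rcases Finset.mem_insert.1 hX with rfl | hX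
        · exact Finset.subset_union_left
        · exact Finset.Subset.trans (Finset.le_sup (f := id) hX) Finset.subset_union_right
      exact hu ▸ h1
    refine ⟨𝒮.biUnion (fun S => insert (f S).1 (f S).2), ?_, ?_, ?_, ?_⟩
    · calc (𝒮.biUnion (fun S => insert (f S).1 (f S).2)).card
          ≤ ∑ S ∈ 𝒮, (insert (f S).1 (f S).2).card := Finset.card_biUnion_le
        _ ≤ ∑ S ∈ 𝒮, segSize pos q b v S := by
            apply Finset.sum_le_sum
            intro S hS
            have h1 := (hf S hS).2
            have h2 := Finset.card_insert_le (f S).1 (f S).2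
            omega
        _ ≤ t := hsum
    · intro X hX
      obtain ⟨S, hS, hXmem⟩ := Finset.mem_biUnion.1 hX
      obtain ⟨hQ, hPs, -, -, -⟩ := himpl S hS
      rcases Finset.mem_insert.1 hXmem with rfl | hXPs
      · exact hQ
      · exact (hPs X hXPs).1
    · intro c
      obtain ⟨S, hS, hcS⟩ := hcov c
      obtain ⟨hQ, hPs, -, -, hu⟩ := himpl S hS
      rw [← hu, Finset.mem_union] at hcS
      rcases hcS with h | h
      · exact ⟨(f S).1, Finset.mem_biUnion.2 ⟨S, hS, Finset.mem_insert_self _ _⟩, h⟩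
      · rw [Finset.mem_sup] at h
        obtain ⟨X, hXPs, hcX⟩ := h
        exact ⟨X, Finset.mem_biUnion.2 ⟨S, hS, Finset.mem_insert_of_mem hXPs⟩, hcX⟩
    · intro X hX Y hY hne'
      obtain ⟨S, hS, hXm⟩ := Finset.mem_biUnion.1 hX
      obtain ⟨S', hS', hYm⟩ := Finset.mem_biUnion.1 hY
      by_cases hSS : S = S'
      · subst hSS
        obtain ⟨hQ, hPs, hd1, hd2, hu⟩ := himpl S hS
        rcases Finset.mem_insert.1 hXm with rfl | hXPs
        · rcases Finset.mem_insert.1 hYm with rfl | hYPs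
          · exact absurd rfl hne'
          · exact (hd1 Y hYPs).symm
        · rcases Finset.mem_insert.1 hYm with rfl | hYPs
          · exact hd1 X hXPs
          · exact hd2 X hXPs Y hYPs hne'
      · exact Finset.disjoint_of_subset_left (hsub S hS X hXm)
          (Finset.disjoint_of_subset_right (hsub S' hS' Y hYm) (hdisjS S hS S' hS' hSS))
end

section
/- Let k ≥ 1, let X be a finite set with |X| = 3k, and let S be a family of 3-element subsets of X such that every element of X lies in exactly 3 members of S. Let S_1,…,S_7 be a partition of S such that for each i ∈ {1,…,7} the members of S_i are pairwise disjoint; write S_i = {S_i^1,…,S_i^{ν_i}} and μ_i = 3k − 3ν_i. Let E=(C,V) be any election whose candidate set C consists of one original candidate for each element of X together with, for every i ∈ {1,…,7}, pairwise disjoint 3-element dummy triples A_i^1,…,A_i^{ν_i}, Ã_i^1,…,Ã_i^{μ_i}, B_i^1,…,B_i^{ν_i}, B̃_i^1,…,B̃_i^{μ_i}, all disjoint from the original candidates, and whose voters are exactly v_i and u_i for i ∈ {1,…,7}, defined as follows: letting y_1,…,y_{μ_i} be an arbitrary enumeration of the original candidates not covered by the members of S_i, voter v_i ranks, from top, the members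 of S_i^1, then of A_i^1, then of S_i^2, then of A_i^2, …, then of S_i^{ν_i}, then of A_i^{ν_i}, then y_1, then the members of Ã_i^1, then y_2, …, then y_{μ_i}, then the members of Ã_i^{μ_i}, and finally all remaining dummy candidates in an arbitrary order in which the three members of each dummy triple occupy consecutive positions (the order within each listed 3-element set being arbitrary); voter u_i is defined identically with B_i^h in place of A_i^h and B̃_i^h in place of Ã_i^h. Then C admits a partition into at most |C|/3 nonempty parts, each of size at most 3 and each ranked consecutively by at least 2 voters of E, if and only if there exist k pairwise disjoint members of S whose union is X. -/
/-- A voter with position function `p` ranks the set `X` consecutively: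
`max_{x∈X} p x − min_{x∈X} p x = |X| − 1`. -/
def RanksConsec {C : Type*} [DecidableEq C] (p : C → ℕ) (X : Finset C) : Prop :=
  ∀ h : X.Nonempty,
    (X.image p).max' (h.image p) - (X.image p).min' (h.image p) = X.card - 1

/-- The position function `p` ranks, from the top, the blocks in the list `L`: the members of
the `k`-th block occupy exactly the positions following those of the previous blocks. -/
def Stacked {C : Type*} (p : C → ℕ) (L : List (Finset C)) : Prop :=
  ∀ (k : ℕ) (hk : k < L.length), ∀ c ∈ L.get ⟨k, hk⟩,
    ((L.take k).map Finset.card).sum < p c ∧ p c ≤ ((L.take (k + 1)).map Finset.card).sum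

set_option maxHeartbeats 1000000

def StackedFrom {C : Type*} (p : C → ℕ) (b : ℕ) (L : List (Finset C)) : Prop :=
  ∀ (k : ℕ) (hk : k < L.length), ∀ c ∈ L.get ⟨k, hk⟩,
    b + ((L.take k).map Finset.card).sum < p c ∧
      p c ≤ b + ((L.take (k + 1)).map Finset.card).sum

theorem stacked_iff_from {C : Type*} (p : C → ℕ) (L : List (Finset C)) :
    Stacked p L ↔ StackedFrom p 0 L := by
  unfold Stacked StackedFrom; simp

theorem stackedFrom_cons {C : Type*} (p : C → ℕ) (b : ℕ) (T : Finset C) (L : List (Finset C)) :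
    StackedFrom p b (T :: L) ↔
      (∀ c ∈ T, b < p c ∧ p c ≤ b + T.card) ∧ StackedFrom p (b + T.card) L := by
  constructor
  · intro H
    constructor
    · intro c hc
      have := H 0 (by simp) c (by simpa using hc)
      simpa using this
    · intro k hk c hc
      have := H (k+1) (by simpa using Nat.succ_lt_succ hk) c (by simpa using hc)
      simp only [List.take_succ_cons, List.map_cons, List.sum_cons] at this
      omega
  · rintro ⟨h0, H⟩ k hk c hc
    match k with
    | 0 =>
      have := h0 c (by simpa using hc)
      simpa using this
    | k+1 =>
      have hk' : k < L.length := by simpa using hk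
      have := H k hk' c (by simpa using hc)
      simp only [List.take_succ_cons, List.map_cons, List.sum_cons]
      omega

theorem stackedFrom_append {C : Type*} (p : C → ℕ) (b : ℕ) (L1 L2 : List (Finset C)) :
    StackedFrom p b (L1 ++ L2) ↔
      StackedFrom p b L1 ∧ StackedFrom p (b + (L1.map Finset.card).sum) L2 := by
  induction L1 generalizing b with
  | nil => simp [StackedFrom]
  | cons T L ih =>
    simp only [List.cons_append, stackedFrom_cons, ih, List.map_cons, List.sum_cons]
    rw [and_assoc, ← add_assoc]

theorem stackedFrom_pairs {C : Type*} (p : C → ℕ) (a3 b3 : ℕ) :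
    ∀ (n : ℕ) (f g : Fin n → Finset C), (∀ h, (f h).card = a3) → (∀ h, (g h).card = b3) →
    ∀ b : ℕ,
    StackedFrom p b ((List.ofFn fun h : Fin n => [f h, g h]).flatten) ↔
      ∀ h : Fin n,
        (∀ c ∈ f h, b + (a3+b3)*h < p c ∧ p c ≤ b + (a3+b3)*h + a3) ∧
        (∀ c ∈ g h, b + (a3+b3)*h + a3 < p c ∧ p c ≤ b + (a3+b3)*h + (a3+b3)) := by
  intro n
  induction n with
  | zero => intro f g hf hg b; simp [StackedFrom]
  | succ n ih =>
    intro f g hf hg b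
    rw [List.ofFn_succ]
    simp only [List.flatten_cons, List.cons_append, List.nil_append]
    rw [stackedFrom_cons, stackedFrom_cons, ih _ _ (fun h => hf h.succ) (fun h => hg h.succ)]
    rw [Fin.forall_fin_succ]
    rw [hf 0, hg 0]
    constructor
    · rintro ⟨h1, h2, h3⟩
      refine ⟨⟨?_, ?_⟩, ?_⟩
      · intro c hc; have := h1 c hc; simp only [Fin.val_zero, mul_zero]; omega
      · intro c hc; have := h2 c hc; simp only [Fin.val_zero, mul_zero]; omega
      · intro h
        have := h3 h
        have e : (b + a3 + b3) + (a3+b3)*(h : ℕ) = b + (a3+b3)*((h.succ : Fin (n+1)) : ℕ) := by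
          simp [Fin.val_succ, Nat.mul_add, Nat.mul_one]; ring
        constructor
        · intro c hc; have := this.1 c hc; omega
        · intro c hc; have := this.2 c hc; omega
    · rintro ⟨⟨h1, h2⟩, h3⟩
      refine ⟨?_, ?_, ?_⟩
      · intro c hc; have := h1 c hc; simp only [Fin.val_zero, mul_zero] at this; omega
      · intro c hc; have := h2 c hc; simp only [Fin.val_zero, mul_zero] at this; omega
      · intro h
        have := h3 h
        have e : (b + a3 + b3) + (a3+b3)*(h : ℕ) = b + (a3+b3)*((h.succ : Fin (n+1)) : ℕ) := by
          simp [Fin.val_succ, Nat.mul_add, Nat.mul_one]; ring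
        constructor
        · intro c hc; have := this.1 c hc; omega
        · intro c hc; have := this.2 c hc; omega

theorem sum_cards_pairs {C : Type*} (a3 b3 : ℕ) :
    ∀ (n : ℕ) (f g : Fin n → Finset C), (∀ h, (f h).card = a3) → (∀ h, (g h).card = b3) →
    (((List.ofFn fun h : Fin n => [f h, g h]).flatten).map Finset.card).sum = (a3+b3)*n := by
  intro n
  induction n with
  | zero => intro f g hf hg; simp
  | succ n ih =>
    intro f g hf hg
    rw [List.ofFn_succ]
    simp only [List.flatten_cons, List.cons_append, List.nil_append, List.map_cons,
      List.sum_cons, ih _ _ (fun h => hf h.succ) (fun h => hg h.succ), hf 0, hg 0]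
    ring

theorem image_eq_Icc {C : Type*} [DecidableEq C] {p : C → ℕ} (hinj : Function.Injective p)
    {Z : Finset C} {a n3 : ℕ} (hcard : Z.card = n3)
    (hbd : ∀ c ∈ Z, a < p c ∧ p c ≤ a + n3) :
    Z.image p = Finset.Icc (a+1) (a+n3) := by
  apply Finset.eq_of_subset_of_card_le
  · intro q hq
    simp only [Finset.mem_image] at hq
    obtain ⟨c, hc, rfl⟩ := hq
    have := hbd c hc
    simp only [Finset.mem_Icc]; omega
  · rw [Finset.card_image_of_injective _ hinj, hcard, Nat.card_Icc]
    omega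

theorem hit_of_bounds {C : Type*} [DecidableEq C] {p : C → ℕ} (hinj : Function.Injective p)
    {Z : Finset C} {a n3 : ℕ} (hcard : Z.card = n3)
    (hbd : ∀ c ∈ Z, a < p c ∧ p c ≤ a + n3) :
    ∀ q, a < q → q ≤ a + n3 → ∃ x ∈ Z, p x = q := by
  intro q h1 h2
  have : q ∈ Z.image p := by
    rw [image_eq_Icc hinj hcard hbd]; simp only [Finset.mem_Icc]; omega
  simpa using this

theorem consec_of_bounds {C : Type*} [DecidableEq C] {p : C → ℕ} (hinj : Function.Injective p)
    {Z : Finset C} {a n3 : ℕ} (hn3 : 1 ≤ n3) (hcard : Z.card = n3)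
    (hbd : ∀ c ∈ Z, a < p c ∧ p c ≤ a + n3) :
    RanksConsec p Z := by
  intro h
  have heq := image_eq_Icc hinj hcard hbd
  have hne' := h.image p
  have h1 : (Z.image p).max' hne' = a + n3 := by
    apply le_antisymm
    · apply Finset.max'_le; intro x hx; rw [heq] at hx
      simp only [Finset.mem_Icc] at hx; omega
    · apply Finset.le_max'; rw [heq]; simp only [Finset.mem_Icc]; omega
  have h2 : (Z.image p).min' hne' = a + 1 := by
    apply le_antisymm
    · apply Finset.min'_le; rw [heq]; simp only [Finset.mem_Icc]; omega
    · apply Finset.le_min'; intro x hx; rw [heq] at hx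
      simp only [Finset.mem_Icc] at hx; omega
  rw [h1, h2, hcard]
  omega

theorem ranksConsec_interval {C : Type*} [DecidableEq C] {p : C → ℕ} (hinj : Function.Injective p)
    {X : Finset C} (hcard : X.card = 3) (hrc : RanksConsec p X) :
    ∃ q, (∀ x ∈ X, q ≤ p x ∧ p x ≤ q + 2) ∧ (∀ r, q ≤ r → r ≤ q + 2 → ∃ x ∈ X, p x = r) := by
  have hne : X.Nonempty := by rw [← Finset.card_pos, hcard]; omega
  have hne' : (X.image p).Nonempty := hne.image p
  set q := (X.image p).min' hne' with hq
  have hmax := hrc hne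
  rw [hcard] at hmax
  have hminle : q ≤ (X.image p).max' hne' :=
    Finset.min'_le _ _ (Finset.max'_mem _ hne')
  have hmaxeq : (X.image p).max' hne' = q + 2 := by omega
  have hsub : X.image p ⊆ Finset.Icc q (q+2) := by
    intro r hr
    have h1 := Finset.min'_le _ r hr
    have h2 := Finset.le_max' _ r hr
    simp only [Finset.mem_Icc]; omega
  have hcardim : (X.image p).card = 3 := by rw [Finset.card_image_of_injective _ hinj, hcard]
  have heq : X.image p = Finset.Icc q (q+2) := by
    apply Finset.eq_of_subset_of_card_le hsub
    rw [hcardim, Nat.card_Icc]; omega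
  refine ⟨q, ?_, ?_⟩
  · intro x hx
    have : p x ∈ X.image p := Finset.mem_image_of_mem p hx
    rw [heq] at this; simp only [Finset.mem_Icc] at this; omega
  · intro r h1 h2
    have : r ∈ X.image p := by rw [heq]; simp only [Finset.mem_Icc]; omega
    simpa using this

section Voter
variable {C : Type*} [DecidableEq C] {p : C → ℕ} {orig : Finset C} {n m' : ℕ}
  {S D : Fin n → Finset C} {yy : Fin m' → C} {D' : Fin m' → Finset C}

theorem voterK2 (hinj : Function.Injective p) (hpos1 : ∀ c, 1 ≤ p c)
    (hS3 : ∀ h, (S h).card = 3) (hD3 : ∀ h, (D h).card = 3) (hD'3 : ∀ ℓ, (D' ℓ).card = 3)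
    (F1 : ∀ h, ∀ c ∈ S h, 6*(h:ℕ) < p c ∧ p c ≤ 6*(h:ℕ)+3)
    (F2 : ∀ h, ∀ c ∈ D h, 6*(h:ℕ)+3 < p c ∧ p c ≤ 6*(h:ℕ)+6)
    (F3 : ∀ ℓ, p (yy ℓ) = 6*n+4*(ℓ:ℕ)+1)
    (F4 : ∀ ℓ, ∀ c ∈ D' ℓ, 6*n+4*(ℓ:ℕ)+1 < p c ∧ p c ≤ 6*n+4*(ℓ:ℕ)+4)
    (d : C) (hd : p d ≤ 6*n+4*m') :
    (∃ h, d ∈ S h) ∨ (∃ h, d ∈ D h) ∨ (∃ ℓ, d = yy ℓ) ∨ (∃ ℓ, d ∈ D' ℓ) := by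
  have h1 : 1 ≤ p d := hpos1 d
  by_cases hq : p d ≤ 6*n
  · have hn : (p d - 1)/6 < n := by omega
    set h0 : Fin n := ⟨(p d - 1)/6, hn⟩ with hh0
    have hb : 6*(h0:ℕ) < p d ∧ p d ≤ 6*(h0:ℕ)+6 := by simp only [hh0]; omega
    by_cases hq2 : p d ≤ 6*(h0:ℕ)+3
    · obtain ⟨x, hx, hpx⟩ := hit_of_bounds hinj (hS3 h0) (F1 h0) (p d) hb.1 hq2
      exact Or.inl ⟨h0, (hinj hpx.symm) ▸ hx⟩
    · obtain ⟨x, hx, hpx⟩ := hit_of_bounds hinj (hD3 h0) (F2 h0) (p d) (by omega) (by omega)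
      exact Or.inr (Or.inl ⟨h0, (hinj hpx.symm) ▸ hx⟩)
  · have hm : (p d - 6*n - 1)/4 < m' := by omega
    set ℓ0 : Fin m' := ⟨(p d - 6*n - 1)/4, hm⟩ with hℓ0
    have hb : 6*n+4*(ℓ0:ℕ) < p d ∧ p d ≤ 6*n+4*(ℓ0:ℕ)+4 := by simp only [hℓ0]; omega
    by_cases hr : p d = 6*n+4*(ℓ0:ℕ)+1
    · refine Or.inr (Or.inr (Or.inl ⟨ℓ0, ?_⟩))
      exact hinj (by rw [F3 ℓ0, hr])
    · obtain ⟨x, hx, hpx⟩ := hit_of_bounds hinj (hD'3 ℓ0) (F4 ℓ0) (p d) (by omega) (by omega)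
      exact Or.inr (Or.inr (Or.inr ⟨ℓ0, (hinj hpx.symm) ▸ hx⟩))

theorem voterK1
    (hdich : ∀ c ∈ orig, (∃ h, c ∈ S h) ∨ (∃ ℓ, yy ℓ = c))
    (F1 : ∀ h, ∀ c ∈ S h, 6*(h:ℕ) < p c ∧ p c ≤ 6*(h:ℕ)+3)
    (F3 : ∀ ℓ, p (yy ℓ) = 6*n+4*(ℓ:ℕ)+1)
    (c : C) (hc : c ∈ orig) : p c + 3 ≤ 6*n+4*m' := by
  rcases hdich c hc with ⟨h, hh⟩ | ⟨ℓ, hℓ⟩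
  · have := (F1 h c hh).2
    have := h.isLt
    omega
  · have := F3 ℓ
    rw [hℓ] at this
    have := ℓ.isLt
    omega

theorem voterK3 (hinj : Function.Injective p) (hpos1 : ∀ c, 1 ≤ p c)
    (hS3 : ∀ h, (S h).card = 3) (hD3 : ∀ h, (D h).card = 3) (hD'3 : ∀ ℓ, (D' ℓ).card = 3)
    (hDo : ∀ h, Disjoint (D h) orig) (hD'o : ∀ ℓ, Disjoint (D' ℓ) orig)
    (hdich : ∀ c ∈ orig, (∃ h, c ∈ S h) ∨ (∃ ℓ, yy ℓ = c))
    (F1 : ∀ h, ∀ c ∈ S h, 6*(h:ℕ) < p c ∧ p c ≤ 6*(h:ℕ)+3)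
    (F2 : ∀ h, ∀ c ∈ D h, 6*(h:ℕ)+3 < p c ∧ p c ≤ 6*(h:ℕ)+6)
    (F3 : ∀ ℓ, p (yy ℓ) = 6*n+4*(ℓ:ℕ)+1)
    (F4 : ∀ ℓ, ∀ c ∈ D' ℓ, 6*n+4*(ℓ:ℕ)+1 < p c ∧ p c ≤ 6*n+4*(ℓ:ℕ)+4)
    (X : Finset C) (hXo : ∀ x ∈ X, x ∈ orig) (hX3 : X.card = 3)
    (hrc : RanksConsec p X) : ∃ h, X = S h := by
  obtain ⟨q, hbd, hhit⟩ := ranksConsec_interval hinj hX3 hrc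
  obtain ⟨c0, hc0X, hpc0⟩ := hhit q le_rfl (by omega)
  have hq1 : 1 ≤ q := by have := hpos1 c0; omega
  obtain ⟨c1, hc1X, hpc1⟩ := hhit (q+1) (by omega) (by omega)
  have hc0o := hXo c0 hc0X
  have hc1o := hXo c1 hc1X
  rcases hdich c1 hc1o with ⟨h, hh⟩ | ⟨ℓ, hℓ⟩
  · have hb1 := F1 h c1 hh
    rw [hpc1] at hb1
    rcases (by omega : q + 1 = 6*(h:ℕ)+1 ∨ q+1 = 6*(h:ℕ)+2 ∨ q+1 = 6*(h:ℕ)+3) with he | he | he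
    · have hne0 : (h:ℕ) ≠ 0 := by omega
      have hlt : (h:ℕ) - 1 < n := by have := h.isLt; omega
      set h' : Fin n := ⟨(h:ℕ)-1, hlt⟩ with hh'
      obtain ⟨x, hxD, hpx⟩ := hit_of_bounds hinj (hD3 h') (F2 h') q
        (by simp only [hh']; omega) (by simp only [hh']; omega)
      have : c0 = x := hinj (by rw [hpc0, hpx])
      exact absurd hc0o (Finset.disjoint_left.mp (hDo h') (this ▸ hxD))
    · refine ⟨h, Finset.eq_of_subset_of_card_le ?_ (by rw [hS3 h, hX3])⟩
      intro x hx
      have hb := hbd x hx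
      obtain ⟨e, heS, hpe⟩ := hit_of_bounds hinj (hS3 h) (F1 h) (p x) (by omega) (by omega)
      exact (hinj hpe) ▸ heS
    · obtain ⟨c2, hc2X, hpc2⟩ := hhit (q+2) (by omega) le_rfl
      obtain ⟨x, hxD, hpx⟩ := hit_of_bounds hinj (hD3 h) (F2 h) (q+2) (by omega) (by omega)
      have : c2 = x := hinj (by rw [hpc2, hpx])
      exact absurd (hXo c2 hc2X) (Finset.disjoint_left.mp (hDo h) (this ▸ hxD))
  · have hy : p c1 = 6*n+4*(ℓ:ℕ)+1 := by rw [← hℓ]; exact F3 ℓ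
    rw [hpc1] at hy
    by_cases hℓ0 : (ℓ:ℕ) = 0
    · have hn1 : 1 ≤ n := by omega
      set h' : Fin n := ⟨n-1, by omega⟩ with hh'
      obtain ⟨x, hxD, hpx⟩ := hit_of_bounds hinj (hD3 h') (F2 h') q
        (by simp only [hh']; omega) (by simp only [hh']; omega)
      have : c0 = x := hinj (by rw [hpc0, hpx])
      exact absurd hc0o (Finset.disjoint_left.mp (hDo h') (this ▸ hxD))
    · have hlt : (ℓ:ℕ) - 1 < m' := by have := ℓ.isLt; omega
      set ℓ' : Fin m' := ⟨(ℓ:ℕ)-1, hlt⟩ with hℓ'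
      obtain ⟨x, hxD, hpx⟩ := hit_of_bounds hinj (hD'3 ℓ') (F4 ℓ') q
        (by simp only [hℓ']; omega) (by simp only [hℓ']; omega)
      have : c0 = x := hinj (by rw [hpc0, hpx])
      exact absurd hc0o (Finset.disjoint_left.mp (hD'o ℓ') (this ▸ hxD))
end Voter

theorem part_count {C : Type*} [Fintype C] [DecidableEq C] (P : Finset (Finset C))
    (hcov : ∀ c : C, ∃ X ∈ P, c ∈ X)
    (hdis : ∀ X ∈ P, ∀ Y ∈ P, X ≠ Y → Disjoint X Y)
    (h3 : ∀ X ∈ P, X.card = 3) : 3 * P.card = Fintype.card C := by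
  have huniv : (Finset.univ : Finset C) = P.biUnion id := by
    apply Finset.Subset.antisymm
    · intro c _
      obtain ⟨X, hX, hcX⟩ := hcov c
      exact Finset.mem_biUnion.mpr ⟨X, hX, hcX⟩
    · intro c _; exact Finset.mem_univ c
  have hb : (P.biUnion id).card = ∑ u ∈ P, (id u).card := Finset.card_biUnion hdis
  calc 3 * P.card = ∑ _u ∈ P, 3 := by rw [Finset.sum_const, smul_eq_mul]; ring
    _ = ∑ u ∈ P, (id u).card := (Finset.sum_congr rfl (fun X hX => (h3 X hX).symm))
    _ = (P.biUnion id).card := hb.symm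
    _ = Fintype.card C := by rw [← huniv, Finset.card_univ]

theorem parts_all3 {C : Type*} [Fintype C] [DecidableEq C] (P : Finset (Finset C))
    (hcov : ∀ c : C, ∃ X ∈ P, c ∈ X)
    (hdis : ∀ X ∈ P, ∀ Y ∈ P, X ≠ Y → Disjoint X Y)
    (hle3 : ∀ X ∈ P, X.card ≤ 3)
    (hcard : P.card ≤ Fintype.card C / 3) : ∀ X ∈ P, X.card = 3 := by
  have huniv : (Finset.univ : Finset C) = P.biUnion id := by
    apply Finset.Subset.antisymm
    · intro c _
      obtain ⟨X, hX, hcX⟩ := hcov c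
      exact Finset.mem_biUnion.mpr ⟨X, hX, hcX⟩
    · intro c _; exact Finset.mem_univ c
  have hb : (P.biUnion id).card = ∑ u ∈ P, (id u).card := Finset.card_biUnion hdis
  have hsum : ∑ u ∈ P, u.card = Fintype.card C := by
    rw [← Finset.card_univ, huniv, hb]; rfl
  by_contra hcon
  push_neg at hcon
  obtain ⟨X0, hX0, hne⟩ := hcon
  have hlt : ∑ u ∈ P, u.card < ∑ _u ∈ P, 3 :=
    Finset.sum_lt_sum (fun X hX => hle3 X hX) ⟨X0, hX0, by have := hle3 X0 hX0; omega⟩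
  rw [Finset.sum_const, smul_eq_mul] at hlt
  have hdiv : Fintype.card C / 3 * 3 ≤ Fintype.card C := Nat.div_mul_le_self _ _
  omega
/-- (RX3C → independent-clone partition reduction.) Let `k ≥ 1`, let `orig`
be the set of original candidates (one per element of the RX3C ground set, `|orig| = 3k`), and
`SS` an RX3C family on it. Let `SS` be partitioned into classes `S_1,…,S_7` with pairwise
disjoint members, class `i` enumerated by `sE i : Fin (ν i) → Finset C`, and for each `i` let
`y i : Fin (μ i) → C` (with `μ i = 3k − 3 ν i`) enumerate the original candidates not covered
by class `i`. Let `A i h, Ã i ℓ, B i h, B̃ i ℓ` be pairwise disjoint dummy triples, disjoint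
from `orig`, together with `orig` exhausting the candidate set. The voters are exactly
`v_1,…,v_7, u_1,…,u_7` with the stacked rankings described in the statement, each ranking the
remaining dummy triples consecutively at the bottom. Then the candidates admit a partition
into at most `|C|/3` nonempty parts, each of size at most 3 and each ranked consecutively
by at least 2 voters, iff there exist `k` pairwise disjoint members of `SS` whose union
is `orig`. -/
theorem stmt_9 {C : Type*} [Fintype C] [DecidableEq C]
    (k : ℕ) (hk : 1 ≤ k)
    (orig : Finset C) (horig : orig.card = 3 * k)
    (SS : Finset (Finset C))
    (hSS : ∀ T ∈ SS, T ⊆ orig ∧ T.card = 3)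
    (hocc : ∀ x ∈ orig, (SS.filter (fun T => x ∈ T)).card = 3)
    (ν μ : Fin 7 → ℕ) (hμ : ∀ i, μ i = 3 * k - 3 * ν i)
    (sE : (i : Fin 7) → Fin (ν i) → Finset C)
    (hpart : ∀ T ∈ SS, ∃! p : Σ i : Fin 7, Fin (ν i), sE p.1 p.2 = T)
    (hmem : ∀ i h, sE i h ∈ SS)
    (hdisj : ∀ (i : Fin 7) (h h' : Fin (ν i)), h ≠ h' → Disjoint (sE i h) (sE i h'))
    (y : (i : Fin 7) → Fin (μ i) → C)
    (hyinj : ∀ i, Function.Injective (y i))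
    (hyrange : ∀ (i : Fin 7) (c : C),
      (∃ ℓ, y i ℓ = c) ↔ (c ∈ orig ∧ ∀ h, c ∉ sE i h))
    (A B : (i : Fin 7) → Fin (ν i) → Finset C)
    (A' B' : (i : Fin 7) → Fin (μ i) → Finset C)
    (hA3 : ∀ i h, (A i h).card = 3) (hB3 : ∀ i h, (B i h).card = 3)
    (hA'3 : ∀ i ℓ, (A' i ℓ).card = 3) (hB'3 : ∀ i ℓ, (B' i ℓ).card = 3)
    (hAo : ∀ i h, Disjoint (A i h) orig) (hBo : ∀ i h, Disjoint (B i h) orig)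
    (hA'o : ∀ i ℓ, Disjoint (A' i ℓ) orig) (hB'o : ∀ i ℓ, Disjoint (B' i ℓ) orig)
    (hAA : ∀ i h i' h', (⟨i, h⟩ : Σ i : Fin 7, Fin (ν i)) ≠ ⟨i', h'⟩ →
      Disjoint (A i h) (A i' h'))
    (hBB : ∀ i h i' h', (⟨i, h⟩ : Σ i : Fin 7, Fin (ν i)) ≠ ⟨i', h'⟩ →
      Disjoint (B i h) (B i' h'))
    (hA'A' : ∀ i ℓ i' ℓ', (⟨i, ℓ⟩ : Σ i : Fin 7, Fin (μ i)) ≠ ⟨i', ℓ'⟩ →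
      Disjoint (A' i ℓ) (A' i' ℓ'))
    (hB'B' : ∀ i ℓ i' ℓ', (⟨i, ℓ⟩ : Σ i : Fin 7, Fin (μ i)) ≠ ⟨i', ℓ'⟩ →
      Disjoint (B' i ℓ) (B' i' ℓ'))
    (hAB : ∀ i h i' h', Disjoint (A i h) (B i' h'))
    (hAA' : ∀ i h i' ℓ', Disjoint (A i h) (A' i' ℓ'))
    (hAB' : ∀ i h i' ℓ', Disjoint (A i h) (B' i' ℓ'))
    (hBA' : ∀ i h i' ℓ', Disjoint (B i h) (A' i' ℓ'))
    (hBB' : ∀ i h i' ℓ', Disjoint (B i h) (B' i' ℓ'))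
    (hA'B' : ∀ i ℓ i' ℓ', Disjoint (A' i ℓ) (B' i' ℓ'))
    (hcover : ∀ c : C, c ∈ orig ∨ (∃ i h, c ∈ A i h) ∨ (∃ i h, c ∈ B i h) ∨
      (∃ i ℓ, c ∈ A' i ℓ) ∨ (∃ i ℓ, c ∈ B' i ℓ))
    (pos : (Fin 7 ⊕ Fin 7) → C → ℕ)
    (hbij : ∀ v, Set.BijOn (pos v) Set.univ (Set.Icc 1 (Fintype.card C)))
    (hv : ∀ i : Fin 7, Stacked (pos (Sum.inl i))
      ((List.ofFn (fun h : Fin (ν i) => [sE i h, A i h])).flatten ++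
        (List.ofFn (fun ℓ : Fin (μ i) => [({y i ℓ} : Finset C), A' i ℓ])).flatten))
    (hu : ∀ i : Fin 7, Stacked (pos (Sum.inr i))
      ((List.ofFn (fun h : Fin (ν i) => [sE i h, B i h])).flatten ++
        (List.ofFn (fun ℓ : Fin (μ i) => [({y i ℓ} : Finset C), B' i ℓ])).flatten))
    (hvA : ∀ i i' h, i' ≠ i → RanksConsec (pos (Sum.inl i)) (A i' h))
    (hvA' : ∀ i i' ℓ, i' ≠ i → RanksConsec (pos (Sum.inl i)) (A' i' ℓ))
    (hvB : ∀ i i' h, RanksConsec (pos (Sum.inl i)) (B i' h))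
    (hvB' : ∀ i i' ℓ, RanksConsec (pos (Sum.inl i)) (B' i' ℓ))
    (huB : ∀ i i' h, i' ≠ i → RanksConsec (pos (Sum.inr i)) (B i' h))
    (huB' : ∀ i i' ℓ, i' ≠ i → RanksConsec (pos (Sum.inr i)) (B' i' ℓ))
    (huA : ∀ i i' h, RanksConsec (pos (Sum.inr i)) (A i' h))
    (huA' : ∀ i i' ℓ, RanksConsec (pos (Sum.inr i)) (A' i' ℓ)) :
    (∃ P : Finset (Finset C), P.card ≤ Fintype.card C / 3 ∧
        (∀ X ∈ P, X.Nonempty ∧ X.card ≤ 3 ∧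
          ∃ v₁ v₂ : Fin 7 ⊕ Fin 7, v₁ ≠ v₂ ∧
            RanksConsec (pos v₁) X ∧ RanksConsec (pos v₂) X) ∧
        (∀ c : C, ∃ X ∈ P, c ∈ X) ∧
        (∀ X ∈ P, ∀ Y ∈ P, X ≠ Y → Disjoint X Y)) ↔
      (∃ SS' ⊆ SS, SS'.card = k ∧
        (∀ T ∈ SS', ∀ T' ∈ SS', T ≠ T' → Disjoint T T') ∧
        SS'.sup id = orig) := by
  classical
  have hinj : ∀ v, Function.Injective (pos v) := fun v a b hab => (hbij v).2.1 trivial trivial hab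
  have hpos1 : ∀ v c, 1 ≤ pos v c := fun v c => ((hbij v).1 (Set.mem_univ c)).1
  have hsE3 : ∀ i h, (sE i h).card = 3 := fun i h => (hSS _ (hmem i h)).2
  have hsEo : ∀ i h, sE i h ⊆ orig := fun i h => (hSS _ (hmem i h)).1
  have hdich : ∀ i, ∀ c ∈ orig, (∃ h, c ∈ sE i h) ∨ (∃ ℓ, y i ℓ = c) := by
    intro i c hc
    by_cases hex : ∃ h, c ∈ sE i h
    · exact Or.inl hex
    · push_neg at hex
      exact Or.inr ((hyrange i c).mpr ⟨hc, hex⟩)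
  have hyo : ∀ i ℓ, y i ℓ ∈ orig := fun i ℓ => ((hyrange i (y i ℓ)).mp ⟨ℓ, rfl⟩).1
  have FV : ∀ i : Fin 7,
      (∀ h, ∀ c ∈ sE i h, 6*(h:ℕ) < pos (Sum.inl i) c ∧ pos (Sum.inl i) c ≤ 6*(h:ℕ)+3) ∧
      (∀ h, ∀ c ∈ A i h, 6*(h:ℕ)+3 < pos (Sum.inl i) c ∧ pos (Sum.inl i) c ≤ 6*(h:ℕ)+6) ∧
      (∀ ℓ, pos (Sum.inl i) (y i ℓ) = 6*(ν i)+4*(ℓ:ℕ)+1) ∧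
      (∀ ℓ, ∀ c ∈ A' i ℓ, 6*(ν i)+4*(ℓ:ℕ)+1 < pos (Sum.inl i) c ∧
        pos (Sum.inl i) c ≤ 6*(ν i)+4*(ℓ:ℕ)+4) := by
    intro i
    have H := (stacked_iff_from _ _).mp (hv i)
    rw [stackedFrom_append] at H
    obtain ⟨H1, H2⟩ := H
    have H1' := (stackedFrom_pairs (pos (Sum.inl i)) 3 3 (ν i) (sE i) (A i)
      (fun h => hsE3 i h) (fun h => hA3 i h) 0).mp H1
    rw [sum_cards_pairs 3 3 (ν i) (sE i) (A i) (fun h => hsE3 i h) (fun h => hA3 i h)] at H2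
    have H2' := (stackedFrom_pairs (pos (Sum.inl i)) 1 3 (μ i) (fun ℓ => {y i ℓ}) (A' i)
      (fun ℓ => Finset.card_singleton _) (fun ℓ => hA'3 i ℓ) _).mp H2
    refine ⟨?_, ?_, ?_, ?_⟩
    · intro h c hc; have := (H1' h).1 c hc; omega
    · intro h c hc; have := (H1' h).2 c hc; omega
    · intro ℓ; have := (H2' ℓ).1 (y i ℓ) (Finset.mem_singleton_self _); omega
    · intro ℓ c hc; have := (H2' ℓ).2 c hc; omega
  have FU : ∀ i : Fin 7,
      (∀ h, ∀ c ∈ sE i h, 6*(h:ℕ) < pos (Sum.inr i) c ∧ pos (Sum.inr i) c ≤ 6*(h:ℕ)+3) ∧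
      (∀ h, ∀ c ∈ B i h, 6*(h:ℕ)+3 < pos (Sum.inr i) c ∧ pos (Sum.inr i) c ≤ 6*(h:ℕ)+6) ∧
      (∀ ℓ, pos (Sum.inr i) (y i ℓ) = 6*(ν i)+4*(ℓ:ℕ)+1) ∧
      (∀ ℓ, ∀ c ∈ B' i ℓ, 6*(ν i)+4*(ℓ:ℕ)+1 < pos (Sum.inr i) c ∧
        pos (Sum.inr i) c ≤ 6*(ν i)+4*(ℓ:ℕ)+4) := by
    intro i
    have H := (stacked_iff_from _ _).mp (hu i)
    rw [stackedFrom_append] at H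
    obtain ⟨H1, H2⟩ := H
    have H1' := (stackedFrom_pairs (pos (Sum.inr i)) 3 3 (ν i) (sE i) (B i)
      (fun h => hsE3 i h) (fun h => hB3 i h) 0).mp H1
    rw [sum_cards_pairs 3 3 (ν i) (sE i) (B i) (fun h => hsE3 i h) (fun h => hB3 i h)] at H2
    have H2' := (stackedFrom_pairs (pos (Sum.inr i)) 1 3 (μ i) (fun ℓ => {y i ℓ}) (B' i)
      (fun ℓ => Finset.card_singleton _) (fun ℓ => hB'3 i ℓ) _).mp H2
    refine ⟨?_, ?_, ?_, ?_⟩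
    · intro h c hc; have := (H1' h).1 c hc; omega
    · intro h c hc; have := (H1' h).2 c hc; omega
    · intro ℓ; have := (H2' ℓ).1 (y i ℓ) (Finset.mem_singleton_self _); omega
    · intro ℓ c hc; have := (H2' ℓ).2 c hc; omega
  have consecSE_v : ∀ i h, RanksConsec (pos (Sum.inl i)) (sE i h) := fun i h =>
    consec_of_bounds (hinj _) (by norm_num) (hsE3 i h) ((FV i).1 h)
  have consecSE_u : ∀ i h, RanksConsec (pos (Sum.inr i)) (sE i h) := fun i h =>
    consec_of_bounds (hinj _) (by norm_num) (hsE3 i h) ((FU i).1 h)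
  have topdum : ∀ (w : Fin 7 ⊕ Fin 7) (X : Finset C), X.card = 3 → RanksConsec (pos w) X →
      (∃ c ∈ X, c ∈ orig) → ∀ d ∈ X, d ∉ orig →
      Sum.elim (fun i => (∃ h, d ∈ A i h) ∨ (∃ ℓ, d ∈ A' i ℓ))
               (fun i => (∃ h, d ∈ B i h) ∨ (∃ ℓ, d ∈ B' i ℓ)) w := by
    rintro (i|i) X hX3 hrc ⟨c, hcX, hco⟩ d hdX hdo
    · simp only [Sum.elim_inl]
      obtain ⟨F1, F2, F3, F4⟩ := FV i
      obtain ⟨q, hbd, -⟩ := ranksConsec_interval (hinj _) hX3 hrc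
      have hcb := voterK1 (hdich i) F1 F3 c hco
      have hdb : pos (Sum.inl i) d ≤ 6*(ν i)+4*(μ i) := by
        have h1 := hbd c hcX; have h2 := hbd d hdX; omega
      rcases voterK2 (hinj _) (hpos1 _) (fun h => hsE3 i h) (fun h => hA3 i h)
        (fun ℓ => hA'3 i ℓ) F1 F2 F3 F4 d hdb with ⟨h, hh⟩ | hA | ⟨ℓ, hℓ⟩ | hA'
      · exact absurd (hsEo i h hh) hdo
      · exact Or.inl hA
      · exact absurd (hℓ ▸ hyo i ℓ) hdo
      · exact Or.inr hA'
    · simp only [Sum.elim_inr]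
      obtain ⟨F1, F2, F3, F4⟩ := FU i
      obtain ⟨q, hbd, -⟩ := ranksConsec_interval (hinj _) hX3 hrc
      have hcb := voterK1 (hdich i) F1 F3 c hco
      have hdb : pos (Sum.inr i) d ≤ 6*(ν i)+4*(μ i) := by
        have h1 := hbd c hcX; have h2 := hbd d hdX; omega
      rcases voterK2 (hinj _) (hpos1 _) (fun h => hsE3 i h) (fun h => hB3 i h)
        (fun ℓ => hB'3 i ℓ) F1 F2 F3 F4 d hdb with ⟨h, hh⟩ | hB | ⟨ℓ, hℓ⟩ | hB'
      · exact absurd (hsEo i h hh) hdo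
      · exact Or.inl hB
      · exact absurd (hℓ ▸ hyo i ℓ) hdo
      · exact Or.inr hB'
  have dumdisj : ∀ (w₁ w₂ : Fin 7 ⊕ Fin 7), w₁ ≠ w₂ → ∀ d : C,
      Sum.elim (fun i => (∃ h, d ∈ A i h) ∨ (∃ ℓ, d ∈ A' i ℓ))
               (fun i => (∃ h, d ∈ B i h) ∨ (∃ ℓ, d ∈ B' i ℓ)) w₁ →
      Sum.elim (fun i => (∃ h, d ∈ A i h) ∨ (∃ ℓ, d ∈ A' i ℓ))
               (fun i => (∃ h, d ∈ B i h) ∨ (∃ ℓ, d ∈ B' i ℓ)) w₂ → False := by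
    rintro (i|i) (j|j) hne d h1 h2 <;>
      simp only [Sum.elim_inl, Sum.elim_inr] at h1 h2
    · have hij : i ≠ j := fun e => hne (by rw [e])
      rcases h1 with ⟨h, hd1⟩ | ⟨ℓ, hd1⟩ <;> rcases h2 with ⟨h', hd2⟩ | ⟨ℓ', hd2⟩
      · exact Finset.disjoint_left.mp
          (hAA i h j h' (fun e => hij (congrArg Sigma.fst e))) hd1 hd2
      · exact Finset.disjoint_left.mp (hAA' i h j ℓ') hd1 hd2
      · exact Finset.disjoint_left.mp (hAA' j h' i ℓ) hd2 hd1
      · exact Finset.disjoint_left.mp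
          (hA'A' i ℓ j ℓ' (fun e => hij (congrArg Sigma.fst e))) hd1 hd2
    · rcases h1 with ⟨h, hd1⟩ | ⟨ℓ, hd1⟩ <;> rcases h2 with ⟨h', hd2⟩ | ⟨ℓ', hd2⟩
      · exact Finset.disjoint_left.mp (hAB i h j h') hd1 hd2
      · exact Finset.disjoint_left.mp (hAB' i h j ℓ') hd1 hd2
      · exact Finset.disjoint_left.mp (hBA' j h' i ℓ) hd2 hd1
      · exact Finset.disjoint_left.mp (hA'B' i ℓ j ℓ') hd1 hd2
    · rcases h1 with ⟨h, hd1⟩ | ⟨ℓ, hd1⟩ <;> rcases h2 with ⟨h', hd2⟩ | ⟨ℓ', hd2⟩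
      · exact Finset.disjoint_left.mp (hAB j h' i h) hd2 hd1
      · exact Finset.disjoint_left.mp (hBA' i h j ℓ') hd1 hd2
      · exact Finset.disjoint_left.mp (hAB' j h' i ℓ) hd2 hd1
      · exact Finset.disjoint_left.mp (hA'B' j ℓ' i ℓ) hd2 hd1
    · have hij : i ≠ j := fun e => hne (by rw [e])
      rcases h1 with ⟨h, hd1⟩ | ⟨ℓ, hd1⟩ <;> rcases h2 with ⟨h', hd2⟩ | ⟨ℓ', hd2⟩
      · exact Finset.disjoint_left.mp
          (hBB i h j h' (fun e => hij (congrArg Sigma.fst e))) hd1 hd2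
      · exact Finset.disjoint_left.mp (hBB' i h j ℓ') hd1 hd2
      · exact Finset.disjoint_left.mp (hBB' j h' i ℓ) hd2 hd1
      · exact Finset.disjoint_left.mp
          (hB'B' i ℓ j ℓ' (fun e => hij (congrArg Sigma.fst e))) hd1 hd2
  constructor
  · rintro ⟨P, hPcard, hPprop, hPcov, hPdis⟩
    have hall3 : ∀ X ∈ P, X.card = 3 :=
      parts_all3 P hPcov hPdis (fun X hX => (hPprop X hX).2.1) hPcard
    have hdich2 : ∀ X ∈ P, (∀ x ∈ X, x ∈ orig) ∨ (∀ x ∈ X, x ∉ orig) := by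
      intro X hX
      by_cases hor : ∀ x ∈ X, x ∉ orig
      · exact Or.inr hor
      · left
        push_neg at hor
        obtain ⟨c, hcX, hco⟩ := hor
        intro d hdX
        by_contra hdo
        obtain ⟨-, -, v₁, v₂, hvne, hrc1, hrc2⟩ := hPprop X hX
        exact dumdisj v₁ v₂ hvne d
          (topdum v₁ X (hall3 X hX) hrc1 ⟨c, hcX, hco⟩ d hdX hdo)
          (topdum v₂ X (hall3 X hX) hrc2 ⟨c, hcX, hco⟩ d hdX hdo)
    set SS' := P.filter (fun X => X ⊆ orig) with hSS'def
    have hSS'P : ∀ X ∈ SS', X ∈ P := fun X hX => (Finset.mem_filter.mp hX).1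
    have hSS'o : ∀ X ∈ SS', X ⊆ orig := fun X hX => (Finset.mem_filter.mp hX).2
    have hSS'SS : SS' ⊆ SS := by
      intro X hX
      have hXP := hSS'P X hX
      obtain ⟨-, -, v₁, v₂, hvne, hrc1, hrc2⟩ := hPprop X hXP
      have hXo : ∀ x ∈ X, x ∈ orig := fun x hx => hSS'o X hX hx
      cases v₁ with
      | inl i =>
        obtain ⟨F1, F2, F3, F4⟩ := FV i
        obtain ⟨h, rfl⟩ := voterK3 (hinj _) (hpos1 _) (fun h => hsE3 i h) (fun h => hA3 i h)
          (fun ℓ => hA'3 i ℓ) (fun h => hAo i h) (fun ℓ => hA'o i ℓ) (hdich i)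
          F1 F2 F3 F4 X hXo (hall3 X hXP) hrc1
        exact hmem i h
      | inr i =>
        obtain ⟨F1, F2, F3, F4⟩ := FU i
        obtain ⟨h, rfl⟩ := voterK3 (hinj _) (hpos1 _) (fun h => hsE3 i h) (fun h => hB3 i h)
          (fun ℓ => hB'3 i ℓ) (fun h => hBo i h) (fun ℓ => hB'o i ℓ) (hdich i)
          F1 F2 F3 F4 X hXo (hall3 X hXP) hrc1
        exact hmem i h
    have hcovorig : ∀ c ∈ orig, ∃ X ∈ SS', c ∈ X := by
      intro c hc
      obtain ⟨X, hXP, hcX⟩ := hPcov c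
      rcases hdich2 X hXP with hsub | hnot
      · exact ⟨X, Finset.mem_filter.mpr ⟨hXP, fun x hx => hsub x hx⟩, hcX⟩
      · exact absurd hc (hnot c hcX)
    have hbiU : orig = SS'.biUnion id := by
      apply Finset.Subset.antisymm
      · intro c hc
        obtain ⟨X, hX, hcX⟩ := hcovorig c hc
        exact Finset.mem_biUnion.mpr ⟨X, hX, hcX⟩
      · intro c hc
        obtain ⟨X, hX, hcX⟩ := Finset.mem_biUnion.mp hc
        exact hSS'o X hX hcX
    have hdisSS' : ∀ X ∈ SS', ∀ Y ∈ SS', X ≠ Y → Disjoint X Y := fun X hX Y hY =>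
      hPdis X (hSS'P X hX) Y (hSS'P Y hY)
    have hcardSS' : SS'.card = k := by
      have h1 : orig.card = ∑ u ∈ SS', (id u).card := by
        rw [hbiU]; exact Finset.card_biUnion hdisSS'
      have h2 : ∑ u ∈ SS', (id u).card = ∑ _u ∈ SS', 3 :=
        Finset.sum_congr rfl (fun X hX => hall3 X (hSS'P X hX))
      rw [Finset.sum_const, smul_eq_mul] at h2
      rw [horig] at h1
      omega
    refine ⟨SS', hSS'SS, hcardSS', hdisSS', ?_⟩
    rw [Finset.sup_eq_biUnion]
    exact hbiU.symm
  · rintro ⟨SS', hsub, hcardk, hdisj', hsup⟩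
    set P : Finset (Finset C) := SS' ∪
        (Finset.univ : Finset (Σ i : Fin 7, Fin (ν i))).image (fun q => A q.1 q.2) ∪
        (Finset.univ : Finset (Σ i : Fin 7, Fin (ν i))).image (fun q => B q.1 q.2) ∪
        (Finset.univ : Finset (Σ i : Fin 7, Fin (μ i))).image (fun q => A' q.1 q.2) ∪
        (Finset.univ : Finset (Σ i : Fin 7, Fin (μ i))).image (fun q => B' q.1 q.2)
      with hPdef
    have hPmem : ∀ X : Finset C, X ∈ P ↔ X ∈ SS' ∨ (∃ i h, A i h = X) ∨ (∃ i h, B i h = X)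
        ∨ (∃ i ℓ, A' i ℓ = X) ∨ (∃ i ℓ, B' i ℓ = X) := by
      intro X
      simp [hPdef, Finset.mem_union, Finset.mem_image, Sigma.exists, or_assoc]
    have hP3 : ∀ X ∈ P, X.card = 3 := by
      intro X hX
      rcases (hPmem X).mp hX with hX' | ⟨i, h, rfl⟩ | ⟨i, h, rfl⟩ | ⟨i, ℓ, rfl⟩ | ⟨i, ℓ, rfl⟩
      · exact (hSS X (hsub hX')).2
      · exact hA3 i h
      · exact hB3 i h
      · exact hA'3 i ℓ
      · exact hB'3 i ℓ
    have hPdisj : ∀ X ∈ P, ∀ Y ∈ P, X ≠ Y → Disjoint X Y := by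
      intro X hX Y hY hne
      rcases (hPmem X).mp hX with hX' | ⟨i, h, rfl⟩ | ⟨i, h, rfl⟩ | ⟨i, ℓ, rfl⟩ | ⟨i, ℓ, rfl⟩ <;>
        rcases (hPmem Y).mp hY with hY' | ⟨i', h', rfl⟩ | ⟨i', h', rfl⟩ | ⟨i', ℓ', rfl⟩ |
          ⟨i', ℓ', rfl⟩
      · exact hdisj' X hX' Y hY' hne
      · exact Finset.disjoint_of_subset_left (hSS X (hsub hX')).1 (hAo i' h').symm
      · exact Finset.disjoint_of_subset_left (hSS X (hsub hX')).1 (hBo i' h').symm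
      · exact Finset.disjoint_of_subset_left (hSS X (hsub hX')).1 (hA'o i' ℓ').symm
      · exact Finset.disjoint_of_subset_left (hSS X (hsub hX')).1 (hB'o i' ℓ').symm
      · exact Finset.disjoint_of_subset_right (hSS Y (hsub hY')).1 (hAo i h)
      · exact hAA i h i' h' (fun e => hne (by cases e; rfl))
      · exact hAB i h i' h'
      · exact hAA' i h i' ℓ'
      · exact hAB' i h i' ℓ'
      · exact Finset.disjoint_of_subset_right (hSS Y (hsub hY')).1 (hBo i h)
      · exact (hAB i' h' i h).symm
      · exact hBB i h i' h' (fun e => hne (by cases e; rfl))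
      · exact hBA' i h i' ℓ'
      · exact hBB' i h i' ℓ'
      · exact Finset.disjoint_of_subset_right (hSS Y (hsub hY')).1 (hA'o i ℓ)
      · exact (hAA' i' h' i ℓ).symm
      · exact (hBA' i' h' i ℓ).symm
      · exact hA'A' i ℓ i' ℓ' (fun e => hne (by cases e; rfl))
      · exact hA'B' i ℓ i' ℓ'
      · exact Finset.disjoint_of_subset_right (hSS Y (hsub hY')).1 (hB'o i ℓ)
      · exact (hAB' i' h' i ℓ).symm
      · exact (hBB' i' h' i ℓ).symm
      · exact (hA'B' i' ℓ' i ℓ).symm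
      · exact hB'B' i ℓ i' ℓ' (fun e => hne (by cases e; rfl))
    have hPcov : ∀ c : C, ∃ X ∈ P, c ∈ X := by
      intro c
      rcases hcover c with hc | ⟨i, h, hc⟩ | ⟨i, h, hc⟩ | ⟨i, ℓ, hc⟩ | ⟨i, ℓ, hc⟩
      · have : c ∈ SS'.sup id := by rw [hsup]; exact hc
        obtain ⟨T, hT, hcT⟩ := Finset.mem_sup.mp this
        exact ⟨T, (hPmem T).mpr (Or.inl hT), hcT⟩
      · exact ⟨A i h, (hPmem _).mpr (Or.inr (Or.inl ⟨i, h, rfl⟩)), hc⟩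
      · exact ⟨B i h, (hPmem _).mpr (Or.inr (Or.inr (Or.inl ⟨i, h, rfl⟩))), hc⟩
      · exact ⟨A' i ℓ, (hPmem _).mpr (Or.inr (Or.inr (Or.inr (Or.inl ⟨i, ℓ, rfl⟩)))), hc⟩
      · exact ⟨B' i ℓ, (hPmem _).mpr (Or.inr (Or.inr (Or.inr (Or.inr ⟨i, ℓ, rfl⟩)))), hc⟩
    have hcount := part_count P hPcov hPdisj hP3
    refine ⟨P, ?_, ?_, hPcov, hPdisj⟩
    · rw [Nat.le_div_iff_mul_le (by norm_num : (0:ℕ) < 3)]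
      omega
    · intro X hX
      refine ⟨Finset.card_pos.mp (by rw [hP3 X hX]; norm_num), le_of_eq (hP3 X hX), ?_⟩
      rcases (hPmem X).mp hX with hX' | ⟨i, h, rfl⟩ | ⟨i, h, rfl⟩ | ⟨i, ℓ, rfl⟩ | ⟨i, ℓ, rfl⟩
      · obtain ⟨⟨i, h⟩, hEq, -⟩ := hpart X (hsub hX')
        refine ⟨Sum.inl i, Sum.inr i, by simp, ?_, ?_⟩
        · rw [← hEq]; exact consecSE_v i h
        · rw [← hEq]; exact consecSE_u i h
      · exact ⟨Sum.inr 0, Sum.inr 1, by simp [Fin.ext_iff], huA 0 i h, huA 1 i h⟩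
      · exact ⟨Sum.inl 0, Sum.inl 1, by simp [Fin.ext_iff], hvB 0 i h, hvB 1 i h⟩
      · exact ⟨Sum.inr 0, Sum.inr 1, by simp [Fin.ext_iff], huA' 0 i ℓ, huA' 1 i ℓ⟩
      · exact ⟨Sum.inl 0, Sum.inl 1, by simp [Fin.ext_iff], hvB' 0 i ℓ, hvB' 1 i ℓ⟩
end

section
/- Let G be a simple graph on a finite vertex set U and let k ≥ 1 be an integer. Define G' as the simple graph on vertex set U × {1,…,k} in which two distinct vertices (u,i) and (v,j) are adjacent exactly if u = v or {u,v} is an edge of G. Then G has a perfect code of size k if and only if G' has a perfect code that contains exactly one vertex from U × {i} for each i ∈ {1,…,k}. -/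
/-- Let `G` be a simple graph on a finite vertex set `U` and `k ≥ 1`. Let
`G'` be the graph on `U × Fin k` where distinct `(u,i)` and `(v,j)` are adjacent iff `u = v`
or `G.Adj u v`. Then `G` has a perfect code of size `k` (a set `S` such that every vertex lies
in the closed neighborhood of exactly one member of `S`) iff `G'` has a perfect code that
contains exactly one vertex from `U × {i}` for each `i`. -/
theorem stmt_10 {U : Type*} [Fintype U] [DecidableEq U] (G : SimpleGraph U)
    (k : ℕ) (hk : 1 ≤ k) :
    (∃ S : Finset U, S.card = k ∧
        ∀ v : U, ∃! u : U, u ∈ S ∧ (u = v ∨ G.Adj u v)) ↔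
      (∃ S' : Finset (U × Fin k),
        (∀ x : U × Fin k, ∃! y : U × Fin k, y ∈ S' ∧
            (y = x ∨ (y ≠ x ∧ (y.1 = x.1 ∨ G.Adj y.1 x.1)))) ∧
        (∀ i : Fin k, (S'.filter (fun y => y.2 = i)).card = 1)) := by
  have key : ∀ (y x : U × Fin k),
      (y = x ∨ (y ≠ x ∧ (y.1 = x.1 ∨ G.Adj y.1 x.1))) ↔ (y.1 = x.1 ∨ G.Adj y.1 x.1) := by
    intro y x
    constructor
    · rintro (rfl | ⟨-, h⟩)
      · exact Or.inl rfl
      · exact h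
    · intro h
      by_cases hyx : y = x
      · exact Or.inl hyx
      · exact Or.inr ⟨hyx, h⟩
  constructor
  · rintro ⟨S, hcard, hS⟩
    have e : {x // x ∈ S} ≃ Fin k := S.equivFinOfCardEq hcard
    refine ⟨S.attach.image (fun u : {x // x ∈ S} => (u.1, e u)), ?_, ?_⟩
    · intro x
      obtain ⟨u, ⟨hu, hdom⟩, huniq⟩ := hS x.1
      refine ⟨((u : U), e ⟨u, hu⟩), ⟨?_, ?_⟩, ?_⟩
      · exact Finset.mem_image.mpr ⟨⟨u, hu⟩, Finset.mem_attach _ _, rfl⟩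
      · rw [key]; exact hdom
      · rintro y ⟨hy, hyd⟩
        rw [key] at hyd
        obtain ⟨w, -, rfl⟩ := Finset.mem_image.mp hy
        have hw : (w : U) = u := huniq w.1 ⟨w.2, hyd⟩
        have : w = ⟨u, hu⟩ := Subtype.ext hw
        rw [this]
    · intro i
      rw [Finset.card_eq_one]
      refine ⟨((e.symm i : U), i), ?_⟩
      ext y
      simp only [Finset.mem_filter, Finset.mem_image, Finset.mem_attach, true_and,
        Finset.mem_singleton]
      constructor
      · rintro ⟨⟨w, rfl⟩, h2⟩
        simp only at h2
        have : w = e.symm i := by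
          apply e.injective
          rw [h2, Equiv.apply_symm_apply]
        rw [this]; simp
      · rintro rfl
        exact ⟨⟨e.symm i, by simp⟩, rfl⟩
  · rintro ⟨S', hS', hfilter⟩
    have inj : ∀ y₁ ∈ S', ∀ y₂ ∈ S', y₁.1 = y₂.1 → y₁ = y₂ := by
      intro y₁ h₁ y₂ h₂ h12
      obtain ⟨y, -, huniq⟩ := hS' y₁
      have e1 : y₁ = y := huniq y₁ ⟨h₁, (key _ _).mpr (Or.inl rfl)⟩
      have e2 : y₂ = y := huniq y₂ ⟨h₂, (key _ _).mpr (Or.inl h12.symm)⟩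
      rw [e1, e2]
    refine ⟨S'.image Prod.fst, ?_, ?_⟩
    · rw [Finset.card_image_of_injOn inj]
      rw [Finset.card_eq_sum_card_fiberwise (f := Prod.snd) (t := Finset.univ)
        (fun x _ => Finset.mem_univ _)]
      simp [hfilter]
    · intro v
      obtain ⟨y, ⟨hy, hyd⟩, huniq⟩ := hS' (v, ⟨0, hk⟩)
      rw [key] at hyd
      refine ⟨y.1, ⟨Finset.mem_image.mpr ⟨y, hy, rfl⟩, hyd⟩, ?_⟩
      rintro u ⟨hu, hud⟩
      obtain ⟨z, hz, rfl⟩ := Finset.mem_image.mp hu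
      have : z = y := huniq z ⟨hz, (key _ _).mpr hud⟩
      rw [this]
end

section
/- Let k ≥ 1, let X = {x_1,…,x_{3k}} be a set of 3k elements, and let S = {S_1,…,S_{3k}} be a family of 3-element subsets of X such that every element of X lies in exactly 3 members of S. Let E=(C,V) be any election with candidate set C = {s_j, s_j^+, s_j^- : j ∈ {1,…,3k}} and the following voters: 9k² type-1 voters, each ranking, from top, s_1^+, s_1, s_1^-, s_2^+, s_2, s_2^-, …, s_{3k}^+, s_{3k}, s_{3k}^-; 9k² type-2 voters, each ranking, from top, s_1^-, s_1, s_1^+, s_2^-, s_2, s_2^+, …, s_{3k}^-, s_{3k}, s_{3k}^+; and, for each pair (x_i, S_j) with x_i ∈ S_j, one coverage voter v_{i,j} whose ranking agrees with a type-1 voter's except that its j-th block is s_j^-, s_j^+, s_j and, for every ℓ ≠ j with x_i ∈ S_ℓ, its ℓ-th block is s_ℓ^+, s_ℓ^-, s_ℓ. Then there exist a set W ⊆ V of at least 18k²+3k voters and a partition of C into at most 6k nonempty parts, each of size at most 2 and each ranked consecutively by every voter in W, if and only if there exist k pairwise disjoint members of S whose union is X. -/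
/-- offsets within the `j`-th block (candidate `(j, τ)` with `τ = 0 ↦ s_j`, `τ = 1 ↦ s_j⁺`,
`τ = 2 ↦ s_j⁻`) for a type-1 voter: order `s⁺, s, s⁻`. -/
def off1 (τ : Fin 3) : ℕ := if τ = 0 then 2 else if τ = 1 then 1 else 3

/-- offsets for a type-2 voter: order `s⁻, s, s⁺`. -/
def off2 (τ : Fin 3) : ℕ := if τ = 0 then 2 else if τ = 1 then 3 else 1

/-- offsets in the `j`-th block of coverage voter `v_{i,j}`: order `s⁻, s⁺, s`. -/
def offSel (τ : Fin 3) : ℕ := if τ = 0 then 3 else if τ = 1 then 2 else 1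

/-- offsets in an `ℓ`-th block (`ℓ ≠ j`, `x_i ∈ S_ℓ`) of coverage voter `v_{i,j}`:
order `s⁺, s⁻, s`. -/
def offOth (τ : Fin 3) : ℕ := if τ = 0 then 3 else if τ = 1 then 1 else 2

@[simp] lemma off1_zero : off1 0 = 2 := rfl
@[simp] lemma off1_one : off1 1 = 1 := rfl
@[simp] lemma off1_two : off1 2 = 3 := rfl
@[simp] lemma off2_zero : off2 0 = 2 := rfl
@[simp] lemma off2_one : off2 1 = 3 := rfl
@[simp] lemma off2_two : off2 2 = 1 := rfl
@[simp] lemma offSel_zero : offSel 0 = 3 := rfl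
@[simp] lemma offSel_one : offSel 1 = 2 := rfl
@[simp] lemma offSel_two : offSel 2 = 1 := rfl
@[simp] lemma offOth_zero : offOth 0 = 3 := rfl
@[simp] lemma offOth_one : offOth 1 = 1 := rfl
@[simp] lemma offOth_two : offOth 2 = 2 := rfl

lemma ranksConsec_singleton {C : Type*} [DecidableEq C] (p : C → ℕ) (a : C) :
    RanksConsec p {a} := by
  intro h
  simp

lemma ranksConsec_pair_iff {C : Type*} [DecidableEq C] {p : C → ℕ} {a b : C} (hab : a ≠ b) :
    RanksConsec p {a, b} ↔ (p a = p b + 1 ∨ p b = p a + 1) := by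
  have hcard : ({a, b} : Finset C).card = 2 := Finset.card_pair hab
  have hne : ({a, b} : Finset C).Nonempty := ⟨a, by simp⟩
  have hni : (({a, b} : Finset C).image p).Nonempty := hne.image p
  set M := (({a, b} : Finset C).image p).max' hni with hMdef
  set m := (({a, b} : Finset C).image p).min' hni with hmdef
  have hM1 : M = p a ∨ M = p b := by
    have := Finset.max'_mem _ hni
    rw [Finset.mem_image] at this
    obtain ⟨x, hx, hx2⟩ := this
    simp only [Finset.mem_insert, Finset.mem_singleton] at hx
    rcases hx with rfl | rfl
    · exact Or.inl hx2.symm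
    · exact Or.inr hx2.symm
  have hm1 : m = p a ∨ m = p b := by
    have := Finset.min'_mem _ hni
    rw [Finset.mem_image] at this
    obtain ⟨x, hx, hx2⟩ := this
    simp only [Finset.mem_insert, Finset.mem_singleton] at hx
    rcases hx with rfl | rfl
    · exact Or.inl hx2.symm
    · exact Or.inr hx2.symm
  have hMa : p a ≤ M := Finset.le_max' _ _ (by simp)
  have hMb : p b ≤ M := Finset.le_max' _ _ (by simp)
  have hma : m ≤ p a := Finset.min'_le _ _ (by simp)
  have hmb : m ≤ p b := Finset.min'_le _ _ (by simp)
  constructor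
  · intro h
    have h2 := h hne
    rw [← hMdef, ← hmdef, hcard] at h2
    omega
  · intro h h'
    have e1 : (({a, b} : Finset C).image p).max' (h'.image p) = M := rfl
    have e2 : (({a, b} : Finset C).image p).min' (h'.image p) = m := rfl
    rw [e1, e2, hcard]
    omega

lemma card_subtype_mem {n : ℕ} (S : Fin n → Finset (Fin n)) (hS3 : ∀ j, (S j).card = 3) :
    Fintype.card {p : Fin n × Fin n // p.1 ∈ S p.2} = 3 * n := by
  have e : {p : Fin n × Fin n // p.1 ∈ S p.2} ≃ Σ j : Fin n, {i : Fin n // i ∈ S j} :=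
    { toFun := fun p => ⟨p.1.2, p.1.1, p.2⟩
      invFun := fun q => ⟨(q.2.1, q.1), q.2.2⟩
      left_inv := fun p => rfl
      right_inv := fun q => rfl }
  rw [Fintype.card_congr e, Fintype.card_sigma]
  simp only [Fintype.card_coe, hS3]
  simp [Finset.sum_const, mul_comm]

lemma exists_mem_of_large {V : Type*} [Fintype V] [DecidableEq V] {W : Finset V}
    {N : ℕ} (f : Fin N → V) (hf : Function.Injective f)
    (h : Fintype.card V - N < W.card) : ∃ v, f v ∈ W := by
  by_contra hc
  push_neg at hc
  have hdis : Disjoint W (Finset.univ.image f) := by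
    rw [Finset.disjoint_right]
    intro x hx
    rw [Finset.mem_image] at hx
    obtain ⟨v, _, rfl⟩ := hx
    exact hc v
  have h2 := Finset.card_le_univ (W ∪ Finset.univ.image f)
  rw [Finset.card_union_of_disjoint hdis, Finset.card_image_of_injective _ hf] at h2
  simp [Fintype.card_fin] at h2
  omega

lemma pair_form {k : ℕ} {a b : Fin (3*k) × Fin 3} (hab : a ≠ b)
    (h1 : 3*(a.1:ℕ) + off1 a.2 = 3*(b.1:ℕ) + off1 b.2 + 1 ∨
          3*(b.1:ℕ) + off1 b.2 = 3*(a.1:ℕ) + off1 a.2 + 1)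
    (h2 : 3*(a.1:ℕ) + off2 a.2 = 3*(b.1:ℕ) + off2 b.2 + 1 ∨
          3*(b.1:ℕ) + off2 b.2 = 3*(a.1:ℕ) + off2 a.2 + 1) :
    ∃ j : Fin (3*k), ({a, b} : Finset _) = {(j, 0), (j, 1)} ∨
      ({a, b} : Finset _) = {(j, 0), (j, 2)} := by
  obtain ⟨ja, τa⟩ := a
  obtain ⟨jb, τb⟩ := b
  fin_cases τa <;> fin_cases τb <;>
    norm_num [off1, off2, Fin.ext_iff] at h1 h2 ⊢ <;>
    first
    | (exfalso; omega)
    | (have hj : ja = jb := Fin.ext (by omega)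
       subst hj
       first
       | exact ⟨ja, Or.inl rfl⟩
       | exact ⟨ja, Or.inr rfl⟩
       | exact ⟨ja, Or.inl (Finset.pair_comm _ _)⟩
       | exact ⟨ja, Or.inr (Finset.pair_comm _ _)⟩)

/-- Let `S₁,…,S_{3k}` be an RX3C family on `X = {x_1,…,x_{3k}}` (each set
has 3 elements and each element lies in exactly 3 sets). Consider the election with candidates
`s_j, s_j⁺, s_j⁻` for `j ∈ [3k]` (candidate `(j,τ) : Fin (3k) × Fin 3`), `9k²` type-1 voters,
`9k²` type-2 voters, and one coverage voter for each pair `(x_i, S_j)` with `x_i ∈ S_j`, with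
the rankings described above. Then there are a set `W` of at least `18k²+3k` voters and a
partition of the candidates into at most `6k` nonempty parts, each of size at most 2 and each
ranked consecutively by every voter in `W`, iff there are `k` pairwise disjoint members of the
family whose union is `X`. -/
theorem stmt_12 (k : ℕ) (hk : 1 ≤ k)
    (S : Fin (3 * k) → Finset (Fin (3 * k)))
    (hS3 : ∀ j, (S j).card = 3)
    (hocc : ∀ i, (Finset.univ.filter (fun j => i ∈ S j)).card = 3)
    (pos : (Fin (9 * k ^ 2) ⊕ (Fin (9 * k ^ 2) ⊕
        {p : Fin (3 * k) × Fin (3 * k) // p.1 ∈ S p.2})) →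
      (Fin (3 * k) × Fin 3) → ℕ)
    (hpos1 : ∀ (v : Fin (9 * k ^ 2)) (c : Fin (3 * k) × Fin 3),
      pos (Sum.inl v) c = 3 * (c.1 : ℕ) + off1 c.2)
    (hpos2 : ∀ (v : Fin (9 * k ^ 2)) (c : Fin (3 * k) × Fin 3),
      pos (Sum.inr (Sum.inl v)) c = 3 * (c.1 : ℕ) + off2 c.2)
    (hposc : ∀ (p : {p : Fin (3 * k) × Fin (3 * k) // p.1 ∈ S p.2})
        (c : Fin (3 * k) × Fin 3),
      pos (Sum.inr (Sum.inr p)) c = 3 * (c.1 : ℕ) +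
        (if c.1 = p.1.2 then offSel c.2
         else if p.1.1 ∈ S c.1 then offOth c.2 else off1 c.2)) :
    (∃ W : Finset (Fin (9 * k ^ 2) ⊕ (Fin (9 * k ^ 2) ⊕
          {p : Fin (3 * k) × Fin (3 * k) // p.1 ∈ S p.2})),
        18 * k ^ 2 + 3 * k ≤ W.card ∧
        ∃ P : Finset (Finset (Fin (3 * k) × Fin 3)), P.card ≤ 6 * k ∧
          (∀ X ∈ P, X.Nonempty ∧ X.card ≤ 2 ∧ ∀ v ∈ W, RanksConsec (pos v) X) ∧
          (∀ c, ∃ X ∈ P, c ∈ X) ∧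
          (∀ X ∈ P, ∀ Y ∈ P, X ≠ Y → Disjoint X Y)) ↔
      (∃ J : Finset (Fin (3 * k)), J.card = k ∧
        (∀ j ∈ J, ∀ j' ∈ J, j ≠ j' → Disjoint (S j) (S j')) ∧
        J.biUnion S = Finset.univ) := by
  constructor
  · rintro ⟨W, hWcard, P, hPcard, hParts, hCover, hDisj⟩
    have hNc := card_subtype_mem S hS3
    have hkk : k ≤ k ^ 2 := Nat.le_self_pow (by norm_num) k
    have hcardV : Fintype.card (Fin (9 * k ^ 2) ⊕ (Fin (9 * k ^ 2) ⊕
        {p : Fin (3 * k) × Fin (3 * k) // p.1 ∈ S p.2})) = 18 * k ^ 2 + 9 * k := by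
      simp [hNc]
      ring
    obtain ⟨v1, hv1⟩ : ∃ v, Sum.inl v ∈ W :=
      exists_mem_of_large Sum.inl Sum.inl_injective (by rw [hcardV]; omega)
    obtain ⟨v2, hv2⟩ : ∃ v, Sum.inr (Sum.inl v) ∈ W :=
      exists_mem_of_large (fun v => Sum.inr (Sum.inl v))
        (fun x y h => by simpa using h) (by rw [hcardV]; omega)
    have hform : ∀ X ∈ P, X.card = 2 → ∃ j : Fin (3*k),
        X = {(j, 0), (j, 1)} ∨ X = {(j, 0), (j, 2)} := by
      intro X hX hc2
      obtain ⟨a, b, hab, rfl⟩ := Finset.card_eq_two.1 hc2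
      have hr1 := (hParts _ hX).2.2 _ hv1
      have hr2 := (hParts _ hX).2.2 _ hv2
      rw [ranksConsec_pair_iff hab] at hr1 hr2
      rw [hpos1 v1 a, hpos1 v1 b] at hr1
      rw [hpos2 v2 a, hpos2 v2 b] at hr2
      exact pair_form hab hr1 hr2
    have hsame : ∀ X ∈ P, ∀ Y ∈ P, ∀ c, c ∈ X → c ∈ Y → X = Y := by
      intro X hX Y hY c hcX hcY
      by_contra hneq
      exact Finset.disjoint_left.1 (hDisj X hX Y hY hneq) hcX hcY
    have hbiU : P.biUnion id = (Finset.univ : Finset (Fin (3*k) × Fin 3)) := by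
      apply Finset.eq_univ_iff_forall.2
      intro c
      obtain ⟨X, hX, hc⟩ := hCover c
      exact Finset.mem_biUnion.2 ⟨X, hX, hc⟩
    have hsum : ∑ X ∈ P, X.card = 9 * k := by
      have h1 := Finset.card_biUnion (t := id) (s := P)
        (fun x hx y hy hxy => hDisj x hx y hy hxy)
      rw [hbiU] at h1
      simp only [Finset.card_univ, Fintype.card_prod, Fintype.card_fin, id_eq] at h1
      omega
    have hblock : ∀ j : Fin (3*k),
        ({(j, (0:Fin 3)), (j, 1)} : Finset _) ∈ P ∨
        ({(j, (0:Fin 3)), (j, 2)} : Finset _) ∈ P := by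
      intro j0
      by_contra hcon
      push_neg at hcon
      obtain ⟨hn1, hn2⟩ := hcon
      set P2 := P.filter (fun X => X.card = 2) with hP2
      have hP2form : ∀ X ∈ P2, ∃ j : Fin (3*k),
          (X = {(j, 0), (j, 1)} ∨ X = {(j, 0), (j, 2)}) ∧
          X.sup (fun c => (c.1:ℕ)) = (j:ℕ) ∧ j ≠ j0 := by
        intro X hX
        rw [hP2, Finset.mem_filter] at hX
        obtain ⟨j, hj⟩ := hform X hX.1 hX.2
        refine ⟨j, hj, ?_, ?_⟩
        · rcases hj with rfl | rfl <;> simp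
        · rintro rfl
          rcases hj with rfl | rfl
          · exact hn1 hX.1
          · exact hn2 hX.1
      have hinj : Set.InjOn (fun X : Finset (Fin (3*k) × Fin 3) => X.sup (fun c => (c.1:ℕ))) ↑P2 := by
        intro X hX Y hY hxy
        obtain ⟨jX, hX1, hX2, _⟩ := hP2form X hX
        obtain ⟨jY, hY1, hY2, _⟩ := hP2form Y hY
        simp only at hxy
        have hjj : jX = jY := Fin.ext (by rw [← hX2, ← hY2, hxy])
        have hXP : X ∈ P := (Finset.mem_filter.1 hX).1
        have hYP : Y ∈ P := (Finset.mem_filter.1 hY).1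
        have hmX : (jX, (0:Fin 3)) ∈ X := by rcases hX1 with rfl | rfl <;> simp
        have hmY : (jX, (0:Fin 3)) ∈ Y := by
          subst hjj
          rcases hY1 with rfl | rfl <;> simp
        exact hsame X hXP Y hYP _ hmX hmY
      have himgsub : P2.image (fun X => X.sup fun c => (c.1:ℕ)) ⊆
          (Finset.range (3*k)).erase (j0:ℕ) := by
        intro x hx
        obtain ⟨X, hX, rfl⟩ := Finset.mem_image.1 hx
        obtain ⟨j, _, h2, h3⟩ := hP2form X hX
        rw [h2]
        exact Finset.mem_erase.2 ⟨fun h => h3 (Fin.ext h), Finset.mem_range.2 j.isLt⟩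
      have hP2card : P2.card ≤ 3*k - 1 := by
        have e1 := Finset.card_image_of_injOn hinj
        have e2 := Finset.card_le_card himgsub
        have e3 : ((Finset.range (3*k)).erase (j0:ℕ)).card = 3*k - 1 := by
          rw [Finset.card_erase_of_mem (Finset.mem_range.2 j0.isLt), Finset.card_range]
        omega
      have h1 : ∑ X ∈ P2, X.card = P2.card * 2 :=
        Finset.sum_const_nat (fun X hX => (Finset.mem_filter.1 hX).2)
      have h2 : ∑ X ∈ P.filter (fun X => ¬ X.card = 2), X.card =
          (P.filter (fun X => ¬ X.card = 2)).card * 1 := by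
        apply Finset.sum_const_nat
        intro X hX
        rw [Finset.mem_filter] at hX
        have hno := (hParts X hX.1).1
        have hle := (hParts X hX.1).2.1
        have := Finset.card_pos.2 hno
        omega
      have h3 := Finset.card_filter_add_card_filter_not
        (s := P) (p := fun X => X.card = 2)
      have h4 := (Finset.sum_filter_add_sum_filter_not P (fun X => X.card = 2)
        (fun X => X.card)).symm
      simp only [← hP2] at h3 h4 h2
      rw [h1, h2] at h4
      omega
    have hcovc : ∀ (q : {p : Fin (3*k) × Fin (3*k) // p.1 ∈ S p.2}),
        Sum.inr (Sum.inr q) ∈ W →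
        (({(q.1.2, (0:Fin 3)), (q.1.2, 2)} : Finset _) ∉ P ∧
         ∀ ℓ, ℓ ≠ q.1.2 → q.1.1 ∈ S ℓ →
           ({(ℓ, (0:Fin 3)), (ℓ, 1)} : Finset _) ∉ P) := by
      intro q hq
      constructor
      · intro hmem
        have hr := (hParts _ hmem).2.2 _ hq
        have hne : ((q.1.2, (0:Fin 3)) : Fin (3*k) × Fin 3) ≠ (q.1.2, 2) := by
          simp
        rw [ranksConsec_pair_iff hne, hposc q _, hposc q _] at hr
        simp only [if_pos rfl] at hr
        simp at hr
      · intro ℓ hℓ hmemS hmem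
        have hr := (hParts _ hmem).2.2 _ hq
        have hne : ((ℓ, (0:Fin 3)) : Fin (3*k) × Fin 3) ≠ (ℓ, 1) := by
          simp
        rw [ranksConsec_pair_iff hne, hposc q _, hposc q _] at hr
        simp [hℓ, hmemS] at hr
    -- coverage voters in W, one per element
    set A : Finset (Fin (9 * k ^ 2) ⊕ (Fin (9 * k ^ 2) ⊕
        {p : Fin (3 * k) × Fin (3 * k) // p.1 ∈ S p.2})) :=
      (Finset.univ.image Sum.inl) ∪ (Finset.univ.image (fun v => Sum.inr (Sum.inl v)))
      with hA
    have hAcard : A.card ≤ 18 * k ^ 2 := by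
      refine le_trans (Finset.card_union_le _ _) ?_
      have e1 := Finset.card_image_le (s := (Finset.univ : Finset (Fin (9*k^2))))
        (f := (Sum.inl : Fin (9*k^2) → Fin (9 * k ^ 2) ⊕ (Fin (9 * k ^ 2) ⊕
          {p : Fin (3 * k) × Fin (3 * k) // p.1 ∈ S p.2})))
      have e2 := Finset.card_image_le (s := (Finset.univ : Finset (Fin (9*k^2))))
        (f := (fun v => Sum.inr (Sum.inl v) : Fin (9*k^2) → Fin (9 * k ^ 2) ⊕ (Fin (9 * k ^ 2) ⊕
          {p : Fin (3 * k) × Fin (3 * k) // p.1 ∈ S p.2})))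
      simp only [Finset.card_univ, Fintype.card_fin] at e1 e2
      omega
    set Wc := W \ A with hWc
    have hWc_cov : ∀ v ∈ Wc, (∃ q, v = Sum.inr (Sum.inr q)) ∧ v ∈ W := by
      intro v hv
      rw [hWc, Finset.mem_sdiff] at hv
      refine ⟨?_, hv.1⟩
      match v with
      | Sum.inl v => exact absurd (Finset.mem_union_left _
          (Finset.mem_image_of_mem _ (Finset.mem_univ v))) hv.2
      | Sum.inr (Sum.inl v) => exact absurd (Finset.mem_union_right _
          (Finset.mem_image_of_mem _ (Finset.mem_univ v))) hv.2
      | Sum.inr (Sum.inr q) => exact ⟨q, rfl⟩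
    have hWccard : 3 * k ≤ Wc.card := by
      have h5 := Finset.card_le_card_sdiff_add_card (s := W) (t := A)
      rw [← hWc] at h5
      omega
    have hkpos : 0 < 3 * k := by omega
    set g : (Fin (9 * k ^ 2) ⊕ (Fin (9 * k ^ 2) ⊕
        {p : Fin (3 * k) × Fin (3 * k) // p.1 ∈ S p.2})) → Fin (3 * k) :=
      fun v => match v with
        | Sum.inr (Sum.inr q) => q.1.1
        | _ => ⟨0, hkpos⟩
      with hg
    have hginj : Set.InjOn g ↑Wc := by
      intro v hv v' hv' hgeq
      obtain ⟨⟨q, rfl⟩, hW⟩ := hWc_cov v hv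
      obtain ⟨⟨q', rfl⟩, hW'⟩ := hWc_cov v' hv'
      simp only [hg] at hgeq
      by_cases hjj : q.1.2 = q'.1.2
      · have : q = q' := Subtype.ext (Prod.ext hgeq hjj)
        rw [this]
      · exfalso
        have h1 := (hcovc q hW).2 q'.1.2 (fun h => hjj h.symm) (hgeq ▸ q'.2)
        have h2 := (hcovc q' hW').1
        exact (hblock q'.1.2).elim h1 h2
    have himg : Wc.image g = Finset.univ := by
      apply Finset.eq_univ_of_card
      have e1 := Finset.card_image_of_injOn hginj
      have e2 := Finset.card_le_univ (Wc.image g)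
      simp only [Finset.card_univ, Fintype.card_fin] at e2 ⊢
      omega
    have hexists : ∀ i : Fin (3 * k),
        ∃ q : {p : Fin (3 * k) × Fin (3 * k) // p.1 ∈ S p.2},
          q.1.1 = i ∧ Sum.inr (Sum.inr q) ∈ W := by
      intro i
      have : i ∈ Wc.image g := himg ▸ Finset.mem_univ i
      obtain ⟨v, hv, hgv⟩ := Finset.mem_image.1 this
      obtain ⟨⟨q, rfl⟩, hW⟩ := hWc_cov v hv
      exact ⟨q, hgv, hW⟩
    set J := Finset.univ.filter
      (fun j => ({(j, (0:Fin 3)), (j, 1)} : Finset (Fin (3 * k) × Fin 3)) ∈ P) with hJ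
    have hmemJiff : ∀ j, j ∈ J ↔ ({(j, (0:Fin 3)), (j, 1)} : Finset _) ∈ P := by
      intro j
      simp [hJ]
    have hkey : ∀ i, ∃ j, i ∈ S j ∧ j ∈ J ∧ ∀ ℓ, i ∈ S ℓ → ℓ ≠ j → ℓ ∉ J := by
      intro i
      obtain ⟨q, hqi, hqW⟩ := hexists i
      refine ⟨q.1.2, hqi ▸ q.2, ?_, ?_⟩
      · rw [hmemJiff]
        rcases hblock q.1.2 with h | h
        · exact h
        · exact absurd h (hcovc q hqW).1
      · intro ℓ hiℓ hne hℓJ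
        exact (hcovc q hqW).2 ℓ hne (hqi ▸ hiℓ) ((hmemJiff ℓ).1 hℓJ)
    have hJdisj : ∀ j ∈ J, ∀ j' ∈ J, j ≠ j' → Disjoint (S j) (S j') := by
      intro j hj j' hj' hnejj
      rw [Finset.disjoint_left]
      intro i hij hij'
      obtain ⟨js, h1, h2, h3⟩ := hkey i
      by_cases h : j = js
      · subst h
        exact h3 j' hij' (fun hh => hnejj hh.symm) hj'
      · exact h3 j hij h hj
    have hJcover : J.biUnion S = Finset.univ := by
      apply Finset.eq_univ_iff_forall.2
      intro i
      obtain ⟨j, h1, h2, _⟩ := hkey i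
      exact Finset.mem_biUnion.2 ⟨j, h2, h1⟩
    have hJcard : J.card = k := by
      have h1 := Finset.card_biUnion hJdisj
      rw [hJcover] at h1
      have h2 : ∑ j ∈ J, (S j).card = J.card * 3 :=
        Finset.sum_const_nat (fun j _ => hS3 j)
      simp only [Finset.card_univ, Fintype.card_fin] at h1
      omega
    exact ⟨J, hJcard, hJdisj, hJcover⟩
  · rintro ⟨J, hJcard, hJdisj, hJcover⟩
    have hjf : ∀ i : Fin (3 * k), ∃ j, j ∈ J ∧ i ∈ S j := by
      intro i
      have hm : i ∈ J.biUnion S := by rw [hJcover]; exact Finset.mem_univ i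
      simpa using Finset.mem_biUnion.1 hm
    choose jf hjfJ hjfm using hjf
    set Wg := (Finset.univ.filter
      (fun q : {p : Fin (3 * k) × Fin (3 * k) // p.1 ∈ S p.2} => q.1.2 ∈ J)) with hWg
    have hWgcard : 3 * k ≤ Wg.card := by
      have h5 : (Finset.univ : Finset (Fin (3 * k))).card ≤ Wg.card :=
        Finset.card_le_card_of_injOn
          (fun i : Fin (3 * k) => (⟨(i, jf i), hjfm i⟩ : {p : Fin (3 * k) × Fin (3 * k) // p.1 ∈ S p.2}))
          (fun i _ => Finset.mem_filter.2 ⟨Finset.mem_univ _, hjfJ i⟩)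
          (fun i _ i' _ h => by simpa using congrArg (fun q : {p : Fin (3 * k) × Fin (3 * k) // p.1 ∈ S p.2} => q.1.1) h)
      simpa using h5
    set W : Finset (Fin (9 * k ^ 2) ⊕ (Fin (9 * k ^ 2) ⊕
        {p : Fin (3 * k) × Fin (3 * k) // p.1 ∈ S p.2})) :=
      ((Finset.univ.image Sum.inl) ∪
       (Finset.univ.image (fun v : Fin (9 * k ^ 2) => Sum.inr (Sum.inl v)))) ∪
      (Wg.image (fun q => Sum.inr (Sum.inr q))) with hW
    have hWmem : ∀ q : {p : Fin (3 * k) × Fin (3 * k) // p.1 ∈ S p.2},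
        Sum.inr (Sum.inr q) ∈ W → q.1.2 ∈ J := by
      intro q hq
      rw [hW] at hq
      rcases Finset.mem_union.1 hq with hq | hq
      · rcases Finset.mem_union.1 hq with hq | hq
        · obtain ⟨v, -, h⟩ := Finset.mem_image.1 hq
          simp at h
        · obtain ⟨v, -, h⟩ := Finset.mem_image.1 hq
          simp at h
      · obtain ⟨q', hq', h⟩ := Finset.mem_image.1 hq
        simp only [Sum.inr.injEq] at h
        subst h
        exact (Finset.mem_filter.1 hq').2
    refine ⟨W, ?_, ?_⟩
    · -- cardinality of W
      have hd1 : Disjoint ((Finset.univ.image Sum.inl : Finset (Fin (9 * k ^ 2) ⊕ (Fin (9 * k ^ 2) ⊕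
            {p : Fin (3 * k) × Fin (3 * k) // p.1 ∈ S p.2}))))
          (Finset.univ.image (fun v : Fin (9 * k ^ 2) => Sum.inr (Sum.inl v))) := by
        rw [Finset.disjoint_left]
        rintro x hx hx'
        obtain ⟨v, -, rfl⟩ := Finset.mem_image.1 hx
        obtain ⟨u, -, h⟩ := Finset.mem_image.1 hx'
        simp at h
      have hd2 : Disjoint (((Finset.univ.image Sum.inl) ∪
            (Finset.univ.image (fun v : Fin (9 * k ^ 2) => Sum.inr (Sum.inl v)))) :
            Finset (Fin (9 * k ^ 2) ⊕ (Fin (9 * k ^ 2) ⊕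
            {p : Fin (3 * k) × Fin (3 * k) // p.1 ∈ S p.2})))
          (Wg.image (fun q => Sum.inr (Sum.inr q))) := by
        rw [Finset.disjoint_left]
        rintro x hx hx'
        obtain ⟨q, -, rfl⟩ := Finset.mem_image.1 hx'
        rcases Finset.mem_union.1 hx with hx | hx
        · obtain ⟨v, -, h⟩ := Finset.mem_image.1 hx
          simp at h
        · obtain ⟨v, -, h⟩ := Finset.mem_image.1 hx
          simp at h
      rw [hW, Finset.card_union_of_disjoint hd2, Finset.card_union_of_disjoint hd1,
        Finset.card_image_of_injective _ Sum.inl_injective,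
        Finset.card_image_of_injective _
          (fun (x y : Fin (9 * k ^ 2)) h => by simpa using h),
        Finset.card_image_of_injective _
          (fun (x y : {p : Fin (3 * k) × Fin (3 * k) // p.1 ∈ S p.2}) h => by simpa using h)]
      simp only [Finset.card_univ, Fintype.card_fin]
      omega
    · -- the partition
      set Pp := Finset.univ.image (fun j : Fin (3 * k) =>
        if j ∈ J then ({(j, (0:Fin 3)), (j, 1)} : Finset (Fin (3 * k) × Fin 3))
        else {(j, (0:Fin 3)), (j, 2)}) with hPp
      set Ps := Finset.univ.image (fun j : Fin (3 * k) =>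
        if j ∈ J then ({(j, (2:Fin 3))} : Finset (Fin (3 * k) × Fin 3))
        else {(j, (1:Fin 3))}) with hPs
      refine ⟨Pp ∪ Ps, ?_, ?_, ?_, ?_⟩
      · -- card bound
        refine le_trans (Finset.card_union_le _ _) ?_
        have e1 := Finset.card_image_le (s := (Finset.univ : Finset (Fin (3 * k))))
          (f := fun j : Fin (3 * k) =>
            if j ∈ J then ({(j, (0:Fin 3)), (j, 1)} : Finset (Fin (3 * k) × Fin 3))
            else {(j, (0:Fin 3)), (j, 2)})
        have e2 := Finset.card_image_le (s := (Finset.univ : Finset (Fin (3 * k))))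
          (f := fun j : Fin (3 * k) =>
            if j ∈ J then ({(j, (2:Fin 3))} : Finset (Fin (3 * k) × Fin 3))
            else {(j, (1:Fin 3))})
        rw [← hPp] at e1
        rw [← hPs] at e2
        simp only [Finset.card_univ, Fintype.card_fin] at e1 e2
        omega
      · -- parts: nonempty, small, consecutive
        intro X hX
        rcases Finset.mem_union.1 hX with hX | hX <;>
          obtain ⟨j, -, rfl⟩ := Finset.mem_image.1 hX <;>
          by_cases hj : j ∈ J <;>
          simp only [hj, if_true, if_false, ite_true, ite_false]
        · refine ⟨⟨_, Finset.mem_insert_self _ _⟩,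
            le_trans (Finset.card_insert_le _ _) (by simp), ?_⟩
          intro v hv
          rcases v with v | v | q
          · rw [ranksConsec_pair_iff (by simp), hpos1 v (j, 0), hpos1 v (j, 1)]
            simp
          · rw [ranksConsec_pair_iff (by simp), hpos2 v (j, 0), hpos2 v (j, 1)]
            simp
          · have hqJ := hWmem q hv
            rw [ranksConsec_pair_iff (by simp), hposc q (j, 0), hposc q (j, 1)]
            by_cases hjq : j = q.1.2
            · simp [hjq]
            · have hnotin : q.1.1 ∉ S j := fun hmm =>
                Finset.disjoint_left.1 (hJdisj j hj _ hqJ hjq) hmm q.2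
              simp [hjq, hnotin]
        · refine ⟨⟨_, Finset.mem_insert_self _ _⟩,
            le_trans (Finset.card_insert_le _ _) (by simp), ?_⟩
          intro v hv
          rcases v with v | v | q
          · rw [ranksConsec_pair_iff (by simp), hpos1 v (j, 0), hpos1 v (j, 2)]
            simp
          · rw [ranksConsec_pair_iff (by simp), hpos2 v (j, 0), hpos2 v (j, 2)]
            simp
          · have hqJ := hWmem q hv
            have hjq : j ≠ q.1.2 := fun h => hj (h ▸ hqJ)
            rw [ranksConsec_pair_iff (by simp), hposc q (j, 0), hposc q (j, 2)]
            by_cases hmem : q.1.1 ∈ S j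
            · simp [hjq, hmem]
            · simp [hjq, hmem]
        · exact ⟨⟨_, Finset.mem_singleton_self _⟩, by simp,
            fun v _ => ranksConsec_singleton _ _⟩
        · exact ⟨⟨_, Finset.mem_singleton_self _⟩, by simp,
            fun v _ => ranksConsec_singleton _ _⟩
      · -- cover
        rintro ⟨j, τ⟩
        have hPpmem : (if j ∈ J then ({(j, (0:Fin 3)), (j, 1)} : Finset (Fin (3 * k) × Fin 3))
            else {(j, (0:Fin 3)), (j, 2)}) ∈ Pp ∪ Ps :=
          Finset.mem_union_left _ (by rw [hPp]; exact Finset.mem_image_of_mem _ (Finset.mem_univ j))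
        have hPsmem : (if j ∈ J then ({(j, (2:Fin 3))} : Finset (Fin (3 * k) × Fin 3))
            else {(j, (1:Fin 3))}) ∈ Pp ∪ Ps :=
          Finset.mem_union_right _ (by rw [hPs]; exact Finset.mem_image_of_mem _ (Finset.mem_univ j))
        by_cases hj : j ∈ J
        · rw [if_pos hj] at hPpmem hPsmem
          fin_cases τ
          · exact ⟨_, hPpmem, by simp⟩
          · exact ⟨_, hPpmem, by simp⟩
          · exact ⟨_, hPsmem, by simp⟩
        · rw [if_neg hj] at hPpmem hPsmem
          fin_cases τ
          · exact ⟨_, hPpmem, by simp⟩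
          · exact ⟨_, hPsmem, by simp⟩
          · exact ⟨_, hPpmem, by simp⟩
      · -- disjoint
        have hfstP : ∀ (j : Fin (3 * k)) (c : Fin (3 * k) × Fin 3),
            c ∈ (if j ∈ J then ({(j, (0:Fin 3)), (j, 1)} : Finset (Fin (3 * k) × Fin 3))
              else {(j, (0:Fin 3)), (j, 2)}) → c.1 = j := by
          intro j c hc
          split at hc <;> simp at hc <;> rcases hc with rfl | rfl <;> rfl
        have hfstS : ∀ (j : Fin (3 * k)) (c : Fin (3 * k) × Fin 3),
            c ∈ (if j ∈ J then ({(j, (2:Fin 3))} : Finset (Fin (3 * k) × Fin 3))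
              else {(j, (1:Fin 3))}) → c.1 = j := by
          intro j c hc
          split at hc <;> simp at hc <;> rw [hc]
        intro X hX Y hY hne
        rcases Finset.mem_union.1 hX with hX | hX <;>
          rcases Finset.mem_union.1 hY with hY | hY <;>
          obtain ⟨j, -, rfl⟩ := Finset.mem_image.1 hX <;>
          obtain ⟨j', -, rfl⟩ := Finset.mem_image.1 hY <;>
          by_cases hjj : j = j'
        · exact absurd (by rw [hjj]) hne
        · rw [Finset.disjoint_left]
          intro c h1 h2
          exact hjj ((hfstP j c h1).symm.trans (hfstP j' c h2))
        · subst hjj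
          by_cases hj : j ∈ J <;>
            simp only [hj, if_true, if_false, ite_true, ite_false] <;>
            rw [Finset.disjoint_left] <;>
            intro c h1 h2 <;>
            simp at h1 h2 <;>
            rcases h1 with rfl | rfl <;>
            simp [Prod.ext_iff] at h2
        · rw [Finset.disjoint_left]
          intro c h1 h2
          exact hjj ((hfstP j c h1).symm.trans (hfstS j' c h2))
        · subst hjj
          by_cases hj : j ∈ J <;>
            simp only [hj, if_true, if_false, ite_true, ite_false] <;>
            rw [Finset.disjoint_left] <;>
            intro c h1 h2 <;>
            simp at h1 h2 <;>
            rcases h2 with rfl | rfl <;>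
            simp [Prod.ext_iff] at h1
        · rw [Finset.disjoint_left]
          intro c h1 h2
          exact hjj ((hfstS j c h1).symm.trans (hfstP j' c h2))
        · exact absurd (by rw [hjj]) hne
        · rw [Finset.disjoint_left]
          intro c h1 h2
          exact hjj ((hfstS j c h1).symm.trans (hfstS j' c h2))
end
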